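/- arXiv:1509.00297 — 6 statements merged into one kernel-verified Lean document; each statement's English description precedes it below -/
import Mathlib

section
/- Let d ≥ 2 be an integer and let h_d(x) = x^{−1} f_d(x). If p, q ∈ ℚ[x] are coprime, q ≠ 0, and ‖h_d − p/q‖ = −2‖q‖ − c for a positive integer c (i.e., p/q is a convergent of h_d with rate of approximation c), then ‖g_d − (x−1)p(x^d)/q(x^d)‖ = −2d‖q‖ − (dc − 1); moreover the polynomials (x−1)p(x^d) and q(x^d) are coprime if and only if (x−1) does not divide q(x). -/
open Polynomial

noncomputable section

/-- The coefficient of `x^{-n}` in the generalized Thue–Morse series `f_d`: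
`(-1)^s` if every base-`d` digit of `n` is `0` or `1` and exactly `s` digits equal `1`,
and `0` otherwise. -/
def tmCoeff (d n : ℕ) : ℚ :=
  if (Nat.digits d n).all (· ≤ 1) then (-1 : ℚ) ^ (Nat.digits d n).sum else 0

/-- We represent the field `ℚ((x⁻¹))` of formal Laurent series in `x⁻¹` as
`LaurentSeries ℚ` in the variable `y = x⁻¹`; the coefficient of `y^n` is the
coefficient of `x^{-n}`.  `fd d` is the generalized Thue–Morse function `f_d`. -/
def fd (d : ℕ) : LaurentSeries ℚ :=
  HahnSeries.ofPowerSeries ℤ ℚ (PowerSeries.mk fun n => tmCoeff d n)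

/-- The element `x` of `ℚ((x⁻¹))`, i.e. `y⁻¹`. -/
def xL : LaurentSeries ℚ := HahnSeries.single (-1 : ℤ) 1

/-- Substitution `x ↦ x^d` on `ℚ((x⁻¹))` (i.e. `y ↦ y^d`). -/
def substPow (d : ℕ) (u : LaurentSeries ℚ) : LaurentSeries ℚ :=
  if h : 0 < d then
    HahnSeries.embDomain
      (OrderEmbedding.ofStrictMono (fun n : ℤ => (d : ℤ) * n)
        (fun a b hab => mul_lt_mul_of_pos_left hab (by exact_mod_cast h))) u
  else 0

/-- The degree `‖u‖` of a Laurent series `u ∈ ℚ((x⁻¹))`: the largest exponent of `x`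
with nonzero coefficient, i.e. minus the order in `y = x⁻¹`. -/
def ldeg (u : LaurentSeries ℚ) : ℤ := -u.order

/-- The embedding of `ℚ[x]` into `ℚ((x⁻¹))`, sending the polynomial variable to `x`. -/
def polyToLS (p : ℚ[X]) : LaurentSeries ℚ := Polynomial.aeval xL p

/-- `u ∈ ℚ((x⁻¹))` is well approximable if for every integer `C` there are polynomials
`p, q`, `q ≠ 0`, with `‖u - p/q‖ < -2‖q‖ - C`. -/
def wellApprox (u : LaurentSeries ℚ) : Prop :=
  ∀ C : ℤ, ∃ p q : ℚ[X], q ≠ 0 ∧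
    ldeg (u - polyToLS p / polyToLS q) < -2 * (q.natDegree : ℤ) - C

/-- `g_d(x) = x^{-d+1} f_d(x)`. -/
def gd (d : ℕ) : LaurentSeries ℚ := HahnSeries.single ((d : ℤ) - 1) 1 * fd d

/-- `h_d(x) = x^{-1} f_d(x)`. -/
def hd (d : ℕ) : LaurentSeries ℚ := HahnSeries.single (1 : ℤ) 1 * fd d

/-- `u_d(x) = (1 - x^{-1}) f_d(x)`. -/
def ud (d : ℕ) : LaurentSeries ℚ := (1 - HahnSeries.single (1 : ℤ) 1) * fd d

/-- The polynomial `1 + x + ⋯ + x^{d-1}`. -/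
def sumPow (d : ℕ) : ℚ[X] := ∑ i ∈ Finset.range d, X ^ i

/-- The real number `f_d(a) = ∏_{t=0}^∞ (1 - a^{-d^t})`. -/
def fdReal (a d : ℕ) : ℝ := ∏' t : ℕ, (1 - (a : ℝ) ^ (-(d ^ t : ℤ)))

/-- A real number `ξ` is badly approximable if there is `c > 0` with
`|ξ - P/Q| ≥ c/Q²` for all integers `P, Q` with `Q ≥ 1`. -/
def badApproxReal (ξ : ℝ) : Prop :=
  ∃ c : ℝ, 0 < c ∧ ∀ P Q : ℤ, 1 ≤ Q → c / (Q : ℝ) ^ 2 ≤ |ξ - (P : ℝ) / Q|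

section TMAuxLemmas

variable {d : ℕ}

lemma mulLeft_injective' (h : 0 < d) : Function.Injective (AddMonoidHom.mulLeft (d : ℤ)) := by
  intro a b hab
  have hd0 : (d : ℤ) ≠ 0 := by exact_mod_cast h.ne'
  exact mul_left_cancel₀ hd0 hab

lemma mulLeft_le' (h : 0 < d) :
    ∀ g g' : ℤ, AddMonoidHom.mulLeft (d : ℤ) g ≤ AddMonoidHom.mulLeft (d : ℤ) g' ↔ g ≤ g' := by
  intro g g'
  have hdp : (0 : ℤ) < d := by exact_mod_cast h
  exact ⟨fun hab => le_of_mul_le_mul_left hab hdp,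
    fun hab => mul_le_mul_of_nonneg_left hab hdp.le⟩

lemma algebraMap_LS (r : ℚ) : algebraMap ℚ (LaurentSeries ℚ) r = HahnSeries.C r := by
  rw [HahnSeries.algebraMap_apply', PowerSeries.algebraMap_apply]
  simp [HahnSeries.ofPowerSeries_C]

/-- The substitution `y ↦ y^d` as an algebra homomorphism. -/
def SAlg (d : ℕ) (h : 0 < d) : LaurentSeries ℚ →ₐ[ℚ] LaurentSeries ℚ :=
  { HahnSeries.embDomainRingHom (AddMonoidHom.mulLeft (d : ℤ)) (mulLeft_injective' h)
      (mulLeft_le' h) with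
    commutes' := fun r => by
      rw [algebraMap_LS]
      exact HahnSeries.embDomainRingHom_C }

lemma substPow_eq (h : 0 < d) (u : LaurentSeries ℚ) : substPow d u = SAlg d h u := by
  rw [substPow, dif_pos h]
  rfl

lemma SAlg_single' (h : 0 < d) (a : ℤ) (r : ℚ) :
    SAlg d h (HahnSeries.single a r) = HahnSeries.single ((d : ℤ) * a) r :=
  HahnSeries.embDomain_single

lemma substPow_coeff_mul (h : 0 < d) (u : LaurentSeries ℚ) (m : ℤ) :
    (substPow d u).coeff ((d : ℤ) * m) = u.coeff m := by
  rw [substPow, dif_pos h]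
  exact HahnSeries.embDomain_coeff

lemma substPow_coeff_not_dvd (h : 0 < d) (u : LaurentSeries ℚ) {n : ℤ}
    (hn : ¬ (d : ℤ) ∣ n) : (substPow d u).coeff n = 0 := by
  rw [substPow, dif_pos h]
  apply HahnSeries.embDomain_notin_range
  rintro ⟨m, hm⟩
  exact hn ⟨m, hm.symm⟩

lemma fd_coeff_nat (d n : ℕ) : (fd d).coeff (n : ℤ) = tmCoeff d n := by
  rw [fd, HahnSeries.ofPowerSeries_apply_coeff]
  simp

lemma fd_coeff_neg (d : ℕ) {n : ℤ} (hn : n < 0) : (fd d).coeff n = 0 := by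
  rw [fd, HahnSeries.ofPowerSeries_apply]
  apply HahnSeries.embDomain_notin_range
  rintro ⟨m, hm⟩
  have : ((m : ℤ)) = n := hm
  omega

lemma tmCoeff_d_mul (hd2 : 2 ≤ d) (m : ℕ) : tmCoeff d (d * m) = tmCoeff d m := by
  rcases Nat.eq_zero_or_pos m with rfl | hm
  · simp
  · have hdig : Nat.digits d (d * m) = 0 :: Nat.digits d m := by
      rw [Nat.digits_def' (show 1 < d by omega) (Nat.mul_pos (by omega) hm),
        Nat.mul_mod_right, Nat.mul_div_cancel_left _ (show 0 < d by omega)]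
    simp [tmCoeff, hdig]

lemma tmCoeff_d_mul_add_one (hd2 : 2 ≤ d) (m : ℕ) :
    tmCoeff d (d * m + 1) = - tmCoeff d m := by
  have hdig : Nat.digits d (d * m + 1) = 1 :: Nat.digits d m := by
    rw [Nat.digits_def' (show 1 < d by omega) (by omega), Nat.mul_add_mod,
      Nat.mod_eq_of_lt (by omega), Nat.mul_add_div (by omega),
      Nat.div_eq_of_lt (by omega), Nat.add_zero]
  by_cases hall : (Nat.digits d m).all (· ≤ 1)
  · simp only [tmCoeff, hdig, List.all_cons, List.sum_cons, hall]
    norm_num [pow_add]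
  · simp [tmCoeff, hdig, hall]

lemma tmCoeff_of_two_le_mod (hd2 : 2 ≤ d) {n : ℕ} (hmod : 2 ≤ n % d) :
    tmCoeff d n = 0 := by
  have hn : 0 < n := by
    rcases Nat.eq_zero_or_pos n with rfl | h
    · simp at hmod
    · exact h
  have hdig := Nat.digits_def' (show 1 < d by omega) hn
  have hnot : ¬ (n % d ≤ 1) := by omega
  simp [tmCoeff, hdig, hnot]

lemma single_one_mul_coeff (u : LaurentSeries ℚ) (n : ℤ) :
    (HahnSeries.single (1 : ℤ) 1 * u).coeff n = u.coeff (n - 1) := by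
  have h := HahnSeries.coeff_single_mul_add (r := (1 : ℚ)) (x := u) (a := n - 1) (b := 1)
  simpa using h

lemma not_dvd_mid (hd2 : 2 ≤ d) {a r : ℤ} (h1 : 1 ≤ r) (h2 : r < d) :
    ¬ (d : ℤ) ∣ (d * a + r) := by
  rintro ⟨t, ht⟩
  have hdr : (d : ℤ) ∣ r := ⟨t - a, by linarith⟩
  have := Int.le_of_dvd (by omega) hdr
  omega

/-- The functional equation `f_d(x) = (1 - x⁻¹) f_d(x^d)`. -/
lemma fd_eq (hd2 : 2 ≤ d) :
    fd d = (1 - HahnSeries.single (1 : ℤ) 1) * substPow d (fd d) := by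
  have hp : 0 < d := by omega
  ext n
  rw [sub_mul, one_mul, HahnSeries.coeff_sub, single_one_mul_coeff]
  rcases lt_or_ge n 0 with hn | hn
  · have hz : ∀ k : ℤ, k < 0 → (substPow d (fd d)).coeff k = 0 := by
      intro k hk
      by_cases hdvd : (d : ℤ) ∣ k
      · obtain ⟨m, rfl⟩ := hdvd
        rw [substPow_coeff_mul hp]
        apply fd_coeff_neg
        by_contra hm
        push_neg at hm
        have : (0 : ℤ) ≤ (d : ℤ) * m := mul_nonneg (by positivity) hm
        omega
      · exact substPow_coeff_not_dvd hp _ hdvd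
    rw [fd_coeff_neg d hn, hz n hn, hz (n - 1) (by omega)]
    ring
  · obtain ⟨k, rfl⟩ := Int.eq_ofNat_of_zero_le hn
    obtain ⟨m, r, hrd, rfl⟩ : ∃ m r, r < d ∧ k = d * m + r :=
      ⟨k / d, k % d, Nat.mod_lt _ (by omega), (Nat.div_add_mod k d).symm⟩
    rw [fd_coeff_nat]
    rcases (show r = 0 ∨ r = 1 ∨ 2 ≤ r by omega) with rfl | rfl | h2
    · rw [show ((d * m + 0 : ℕ) : ℤ) = (d : ℤ) * (m : ℤ) by push_cast; ring,
        substPow_coeff_mul hp, fd_coeff_nat,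
        show (d : ℤ) * (m : ℤ) - 1 = (d : ℤ) * ((m : ℤ) - 1) + ((d : ℤ) - 1) by ring,
        substPow_coeff_not_dvd hp _ (not_dvd_mid hd2 (by omega) (by omega)),
        Nat.add_zero, tmCoeff_d_mul hd2]
      ring
    · rw [show ((d * m + 1 : ℕ) : ℤ) = (d : ℤ) * (m : ℤ) + 1 by push_cast; ring,
        substPow_coeff_not_dvd hp _ (not_dvd_mid hd2 (by omega) (by omega)),
        show (d : ℤ) * (m : ℤ) + 1 - 1 = (d : ℤ) * (m : ℤ) by ring,
        substPow_coeff_mul hp, fd_coeff_nat, tmCoeff_d_mul_add_one hd2]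
      ring
    · rw [show ((d * m + r : ℕ) : ℤ) = (d : ℤ) * (m : ℤ) + (r : ℤ) by push_cast; ring,
        substPow_coeff_not_dvd hp _ (not_dvd_mid hd2 (by omega) (by omega)),
        show (d : ℤ) * (m : ℤ) + (r : ℤ) - 1 = (d : ℤ) * (m : ℤ) + ((r : ℤ) - 1) by ring,
        substPow_coeff_not_dvd hp _ (not_dvd_mid hd2 (by omega) (by omega)),
        tmCoeff_of_two_le_mod hd2 (by rwa [Nat.mul_add_mod, Nat.mod_eq_of_lt hrd])]
      ring

lemma substPow_ne_zero (h : 0 < d) {u : LaurentSeries ℚ} (hu : u ≠ 0) :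
    substPow d u ≠ 0 :=
  HahnSeries.ne_zero_of_coeff_ne_zero (g := (d : ℤ) * u.order)
    (by rw [substPow_coeff_mul h]; exact (HahnSeries.coeff_order_eq_zero.not.mpr hu))

lemma order_substPow (h : 0 < d) {u : LaurentSeries ℚ} (hu : u ≠ 0) :
    (substPow d u).order = (d : ℤ) * u.order := by
  apply le_antisymm
  · apply HahnSeries.order_le_of_coeff_ne_zero
    rw [substPow_coeff_mul h]
    exact (HahnSeries.coeff_order_eq_zero.not.mpr hu)
  · have hne := substPow_ne_zero h hu
    have hc := (HahnSeries.coeff_order_eq_zero.not.mpr hne)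
    by_cases hdvd : (d : ℤ) ∣ (substPow d u).order
    · obtain ⟨m, hm⟩ := hdvd
      rw [hm, substPow_coeff_mul h] at hc
      have := HahnSeries.order_le_of_coeff_ne_zero hc
      rw [hm]
      exact mul_le_mul_of_nonneg_left this (by positivity)
    · exact absurd (substPow_coeff_not_dvd h u hdvd) hc

lemma ldeg_substPow (h : 0 < d) {u : LaurentSeries ℚ} (hu : u ≠ 0) :
    ldeg (substPow d u) = (d : ℤ) * ldeg u := by
  rw [ldeg, ldeg, order_substPow h hu]; ring

lemma ldeg_mul {u v : LaurentSeries ℚ} (hu : u ≠ 0) (hv : v ≠ 0) :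
    ldeg (u * v) = ldeg u + ldeg v := by
  rw [ldeg, ldeg, ldeg, HahnSeries.order_mul hu hv]; ring

lemma xm1_coeff : (xL - 1).coeff (-1) = 1 := by
  rw [HahnSeries.coeff_sub, xL, HahnSeries.coeff_single_same, HahnSeries.coeff_one,
    if_neg (by omega)]
  ring

lemma xm1_ne : xL - 1 ≠ 0 :=
  HahnSeries.ne_zero_of_coeff_ne_zero (g := -1) (by rw [xm1_coeff]; exact one_ne_zero)

lemma ldeg_xm1 : ldeg (xL - 1) = 1 := by
  have hle : (xL - 1).order ≤ -1 :=
    HahnSeries.order_le_of_coeff_ne_zero (by rw [xm1_coeff]; exact one_ne_zero)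
  have hge : -1 ≤ (xL - 1).order := by
    by_contra hlt
    push_neg at hlt
    have hc := (HahnSeries.coeff_order_eq_zero.not.mpr xm1_ne)
    apply hc
    have h1 : (xL - 1).order ≠ -1 := by omega
    have h0 : (xL - 1).order ≠ 0 := by omega
    rw [HahnSeries.coeff_sub,
      show xL.coeff ((xL - 1).order) = 0 from by
        rw [xL]; exact HahnSeries.coeff_single_of_ne h1,
      HahnSeries.coeff_one, if_neg h0]
    ring
  rw [ldeg]; omega

lemma xL_pow (k : ℕ) : xL ^ k = HahnSeries.single (-(k : ℤ)) (1 : ℚ) := by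
  induction k with
  | zero => simpa using HahnSeries.single_zero_one.symm
  | succ k ih =>
    rw [pow_succ, ih, xL, HahnSeries.single_mul_single]
    norm_num
    congr 1
    push_cast
    ring

lemma S_xL (h : 0 < d) : SAlg d h xL = xL ^ d := by
  rw [xL_pow, xL, SAlg_single' h]
  norm_num

lemma S_polyToLS (h : 0 < d) (r : ℚ[X]) :
    SAlg d h (polyToLS r) = polyToLS (r.comp (X ^ d)) := by
  rw [polyToLS, polyToLS, ← Polynomial.aeval_algHom_apply, Polynomial.aeval_comp, S_xL h]
  congr 1
  simp

/-- The identity `g_d(x) = (x - 1) · h_d(x^d)`. -/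
lemma gd_eq (hd2 : 2 ≤ d) : gd d = (xL - 1) * substPow d (hd d) := by
  have hp : 0 < d := by omega
  have h1 : substPow d (hd d) = HahnSeries.single (d : ℤ) 1 * substPow d (fd d) := by
    rw [hd, substPow_eq hp, map_mul, SAlg_single' hp, ← substPow_eq hp]
    norm_num
  have e : HahnSeries.single ((d : ℤ) - 1) (1 : ℚ) * (1 - HahnSeries.single (1 : ℤ) 1)
      = (HahnSeries.single (-1 : ℤ) 1 - 1) * HahnSeries.single (d : ℤ) 1 := by
    rw [mul_sub, mul_one, sub_mul, one_mul, HahnSeries.single_mul_single,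
      HahnSeries.single_mul_single]
    norm_num
    exact congrArg (fun t : ℤ => HahnSeries.single t (1 : ℚ)) (by ring)
  rw [gd, fd_eq hd2, h1, xL, ← mul_assoc, ← mul_assoc, e]

lemma polyToLS_mul_X_sub_one (r : ℚ[X]) :
    polyToLS ((X - 1) * r) = (xL - 1) * polyToLS r := by
  simp [polyToLS, map_mul, map_sub]

end TMAuxLemmas

/-- Lemma 1: convergents of `h_d` produce convergents of `g_d`. -/
theorem convergents_from_hd (d : ℕ) (hd2 : 2 ≤ d) (p q : ℚ[X])
    (hpq : IsCoprime p q) (hq : q ≠ 0) (c : ℤ) (hc : 0 < c)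
    (h : ldeg (hd d - polyToLS p / polyToLS q) = -2 * (q.natDegree : ℤ) - c) :
    ldeg (gd d - polyToLS ((X - 1) * p.comp (X ^ d)) / polyToLS (q.comp (X ^ d)))
        = -2 * (d : ℤ) * (q.natDegree : ℤ) - ((d : ℤ) * c - 1) ∧
      (IsCoprime ((X - 1) * p.comp (X ^ d)) (q.comp (X ^ d)) ↔ ¬ (X - 1 ∣ q)) := by
  have hp : 0 < d := by omega
  constructor
  · have hεne : hd d - polyToLS p / polyToLS q ≠ 0 := by
      intro h0
      rw [h0] at h
      simp [ldeg] at h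
      omega
    have key : gd d - polyToLS ((X - 1) * p.comp (X ^ d)) / polyToLS (q.comp (X ^ d))
        = (xL - 1) * substPow d (hd d - polyToLS p / polyToLS q) := by
      rw [gd_eq hd2, polyToLS_mul_X_sub_one, ← S_polyToLS hp p, ← S_polyToLS hp q,
        substPow_eq hp (hd d), substPow_eq hp (hd d - polyToLS p / polyToLS q),
        mul_div_assoc, ← map_div₀, ← mul_sub, ← map_sub]
    rw [key, ldeg_mul xm1_ne (substPow_ne_zero hp hεne), ldeg_xm1,
      ldeg_substPow hp hεne, h]
    ring
  · have hcomp : IsCoprime (p.comp (X ^ d)) (q.comp (X ^ d)) := by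
      have := hpq.map (Polynomial.aeval (X ^ d : ℚ[X])).toRingHom
      simpa [← Polynomial.comp_eq_aeval] using this
    have hdvd_iff : ((X - 1 : ℚ[X]) ∣ q.comp (X ^ d)) ↔ ((X - 1 : ℚ[X]) ∣ q) := by
      have h1 : (X - 1 : ℚ[X]) = X - C 1 := by rw [map_one]
      rw [h1, Polynomial.dvd_iff_isRoot, Polynomial.dvd_iff_isRoot]
      simp [Polynomial.IsRoot, Polynomial.eval_comp]
    have hirr : Irreducible (X - 1 : ℚ[X]) := by
      have := Polynomial.irreducible_X_sub_C (1 : ℚ)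
      rwa [map_one] at this
    rw [IsCoprime.mul_left_iff, and_iff_left hcomp, hirr.coprime_iff_not_dvd, hdvd_iff]
end
end

section
/- Let d ≥ 2 be an integer and let u_d(x) = (1 − x^{−1}) f_d(x). If p, q ∈ ℚ[x] are coprime, q ≠ 0, and ‖u_d − p/q‖ = −2‖q‖ − c for a positive integer c (i.e., p/q is a convergent of u_d with rate of approximation c), then ‖g_d − p(x^d)/((1 + x + ⋯ + x^{d−1})·q(x^d))‖ = −2(d‖q‖ + d − 1) − (d(c−1) + 1); moreover the polynomials p(x^d) and (1 + x + ⋯ + x^{d−1})·q(x^d) are coprime if and only if (x−1) does not divide p(x). -/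
open Polynomial

noncomputable section

namespace MyAux

/-- the substitution as a ring hom -/
def substHom (d : ℕ) (hd : 0 < d) : LaurentSeries ℚ →+* LaurentSeries ℚ :=
  HahnSeries.embDomainRingHom (AddMonoidHom.mulLeft (d : ℤ))
    (fun a b hab => by
      simpa using mul_left_cancel₀ (a := (d : ℤ)) (by exact_mod_cast hd.ne') hab)
    (fun g g' => by
      show (d : ℤ) * g ≤ (d : ℤ) * g' ↔ g ≤ g'
      exact mul_le_mul_iff_of_pos_left (by exact_mod_cast hd))

lemma substPow_eq (d : ℕ) (hd : 0 < d) (u : LaurentSeries ℚ) :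
    substPow d u = substHom d hd u := by
  rw [substPow, dif_pos hd]
  show HahnSeries.embDomain _ u = HahnSeries.embDomain _ u
  congr 1


lemma substHom_coeff (d : ℕ) (hd : 0 < d) (u : LaurentSeries ℚ) (a : ℤ) :
    (substHom d hd u).coeff ((d : ℤ) * a) = u.coeff a :=
  HahnSeries.embDomain_coeff (a := a)

lemma substHom_coeff_not_dvd (d : ℕ) (hd : 0 < d) (u : LaurentSeries ℚ) (m : ℤ)
    (hm : ¬ (d : ℤ) ∣ m) : (substHom d hd u).coeff m = 0 := by
  apply HahnSeries.embDomain_notin_range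
  rintro ⟨a, rfl⟩
  exact hm ⟨a, rfl⟩

lemma substHom_single (d : ℕ) (hd : 0 < d) (a : ℤ) (r : ℚ) :
    substHom d hd (HahnSeries.single a r) = HahnSeries.single ((d : ℤ) * a) r :=
  HahnSeries.embDomain_single

lemma substHom_ne_zero (d : ℕ) (hd : 0 < d) {u : LaurentSeries ℚ} (hu : u ≠ 0) :
    substHom d hd u ≠ 0 := by
  intro h
  apply hu
  have := HahnSeries.coeff_order_eq_zero.not.mpr hu
  have h2 := substHom_coeff d hd u u.order
  rw [h] at h2
  simp at h2
  exact absurd h2.symm this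

lemma order_substHom (d : ℕ) (hd : 0 < d) {u : LaurentSeries ℚ} (hu : u ≠ 0) :
    (substHom d hd u).order = (d : ℤ) * u.order := by
  refine le_antisymm ?_ ?_
  · apply HahnSeries.order_le_of_coeff_ne_zero
    rw [substHom_coeff]
    exact HahnSeries.coeff_order_eq_zero.not.mpr hu
  · have hne := substHom_ne_zero d hd hu
    have h1 := HahnSeries.coeff_order_eq_zero.not.mpr hne
    have h2 : (substHom d hd u).order ∈ (substHom d hd u).support := h1
    have h3 := HahnSeries.support_embDomain_subset h2
    obtain ⟨a, ha, hae⟩ := h3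
    have : u.order ≤ a := HahnSeries.order_le_of_coeff_ne_zero ha
    have : (d : ℤ) * u.order ≤ (d : ℤ) * a :=
      mul_le_mul_of_nonneg_left this (by positivity)
    simpa [← hae] using this


lemma xL_pow (n : ℕ) : xL ^ n = HahnSeries.single (-(n : ℤ)) 1 := by
  rw [xL, HahnSeries.single_pow]
  simp

lemma polyToLS_coeff (p : ℚ[X]) (m : ℤ) :
    (polyToLS p).coeff m = if 0 ≤ -m then p.coeff (-m).toNat else 0 := by
  induction p using Polynomial.induction_on' with
  | add f g hf hg =>
    rw [polyToLS, map_add]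
    rw [polyToLS] at hf hg
    simp only [HahnSeries.coeff_add, hf, hg, Polynomial.coeff_add]
    split <;> simp
  | monomial n a =>
    rw [polyToLS, Polynomial.aeval_monomial, xL_pow]
    have : (algebraMap ℚ (LaurentSeries ℚ)) a = HahnSeries.single (0 : ℤ) a := by
      rw [HahnSeries.algebraMap_apply']
      have : algebraMap ℚ (PowerSeries ℚ) a = PowerSeries.C a := rfl
      rw [this]
      show HahnSeries.ofPowerSeries ℤ ℚ _ = _
      rw [HahnSeries.ofPowerSeries_C]
      rfl
    rw [this, HahnSeries.single_mul_single]
    simp only [zero_add, HahnSeries.coeff_single, Polynomial.coeff_monomial]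
    by_cases hmn : m = -(n : ℤ)
    · subst hmn
      simp
    · rw [if_neg hmn]
      split
      · rw [if_neg]
        omega
      · rfl

lemma polyToLS_ne_zero {p : ℚ[X]} (hp : p ≠ 0) : polyToLS p ≠ 0 := by
  intro h
  have := polyToLS_coeff p (-(p.natDegree : ℤ))
  rw [h] at this
  simp only [HahnSeries.coeff_zero, neg_neg, Int.toNat_natCast] at this
  rw [if_pos (by omega)] at this
  exact Polynomial.leadingCoeff_ne_zero.mpr hp this.symm

lemma order_polyToLS {p : ℚ[X]} (hp : p ≠ 0) :
    (polyToLS p).order = -(p.natDegree : ℤ) := by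
  refine le_antisymm ?_ ?_
  · apply HahnSeries.order_le_of_coeff_ne_zero
    rw [polyToLS_coeff]
    rw [if_pos (by omega)]
    simpa using Polynomial.leadingCoeff_ne_zero.mpr hp
  · have h1 := HahnSeries.coeff_order_eq_zero.not.mpr (polyToLS_ne_zero hp)
    rw [polyToLS_coeff] at h1
    by_cases h : 0 ≤ -(polyToLS p).order
    · rw [if_pos h] at h1
      have := Polynomial.le_natDegree_of_ne_zero h1
      omega
    · rw [if_neg h] at h1
      exact absurd rfl h1


lemma tm_mul {d : ℕ} (hd2 : 2 ≤ d) (m : ℕ) : tmCoeff d (d * m) = tmCoeff d m := by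
  rcases Nat.eq_zero_or_pos m with rfl | hm
  · simp
  · have h := Nat.digits_def' (by omega : 1 < d) (by positivity : 0 < d * m)
    rw [Nat.mul_mod_right, Nat.mul_div_cancel_left _ (by omega : 0 < d)] at h
    unfold tmCoeff
    rw [h]
    simp

lemma tm_succ {d : ℕ} (hd2 : 2 ≤ d) (m : ℕ) : tmCoeff d (d * m + 1) = -tmCoeff d m := by
  have h := Nat.digits_def' (by omega : 1 < d) (by positivity : 0 < d * m + 1)
  have h1 : (d * m + 1) % d = 1 := by
    rw [Nat.mul_add_mod]
    exact Nat.mod_eq_of_lt (by omega)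
  have h2 : (d * m + 1) / d = m := by
    rw [Nat.mul_add_div (by omega)]
    simp [Nat.div_eq_of_lt (by omega : 1 < d)]
  rw [h1, h2] at h
  unfold tmCoeff
  rw [h]
  by_cases hall : (Nat.digits d m).all (· ≤ 1)
  · rw [if_pos hall, if_pos (by simpa using hall)]
    simp [pow_succ, pow_add]
  · rw [if_neg hall, if_neg (by simpa using hall)]
    simp

lemma tm_other {d : ℕ} (hd2 : 2 ≤ d) (m r : ℕ) (hr2 : 2 ≤ r) (hrd : r < d) :
    tmCoeff d (d * m + r) = 0 := by
  have h := Nat.digits_def' (by omega : 1 < d) (by omega : 0 < d * m + r)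
  have h1 : (d * m + r) % d = r := by
    rw [Nat.mul_add_mod]
    exact Nat.mod_eq_of_lt hrd
  rw [h1] at h
  unfold tmCoeff
  rw [h, if_neg]
  simp only [List.all_cons, Bool.and_eq_true, decide_eq_true_eq]
  rintro ⟨hr1, -⟩
  omega


lemma fd_coeff_nat (d : ℕ) (n : ℕ) : (fd d).coeff (n : ℤ) = tmCoeff d n := by
  rw [fd]
  rw [show ((n : ℤ)) = ((n : ℕ) : ℤ) from rfl]
  rw [HahnSeries.ofPowerSeries_apply_coeff]
  simp

lemma fd_coeff_neg (d : ℕ) (m : ℤ) (hm : m < 0) : (fd d).coeff m = 0 := by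
  rw [fd, HahnSeries.ofPowerSeries_apply]
  apply HahnSeries.embDomain_notin_range
  rintro ⟨a, rfl⟩
  simp at hm
  omega

/-- coefficient of `substHom d (fd d)` -/
lemma V_coeff (d : ℕ) (hd : 0 < d) (m : ℤ) :
    (substHom d hd (fd d)).coeff m =
      if (d : ℤ) ∣ m ∧ 0 ≤ m then tmCoeff d (m.toNat / d) else 0 := by
  by_cases h : (d : ℤ) ∣ m
  · obtain ⟨a, rfl⟩ := h
    rw [substHom_coeff]
    by_cases ha : 0 ≤ a
    · rw [if_pos ⟨⟨a, rfl⟩, by positivity⟩]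
      obtain ⟨n, rfl⟩ := Int.eq_ofNat_of_zero_le ha
      rw [fd_coeff_nat]
      congr 1
      rw [show ((d : ℤ) * n).toNat = d * n by omega]
      rw [Nat.mul_div_cancel_left _ hd]
    · rw [if_neg (by rintro ⟨-, hm⟩; nlinarith [hm]), fd_coeff_neg]
      nlinarith [not_le.mp ha]
  · rw [substHom_coeff_not_dvd d hd _ _ h, if_neg (by tauto)]

lemma fd_eq (d : ℕ) (hd2 : 2 ≤ d) (hd : 0 < d) :
    fd d = (1 - HahnSeries.single (1 : ℤ) 1) * substHom d hd (fd d) := by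
  ext m
  rw [sub_mul, one_mul, HahnSeries.coeff_sub]
  have hsing : (HahnSeries.single (1 : ℤ) (1 : ℚ) * substHom d hd (fd d)).coeff m
      = (substHom d hd (fd d)).coeff (m - 1) := by
    have := HahnSeries.coeff_single_mul_add (r := (1 : ℚ))
      (x := substHom d hd (fd d)) (a := m - 1) (b := (1 : ℤ))
    simpa using this
  rw [hsing, V_coeff, V_coeff]
  rcases lt_or_ge m 0 with hm | hm
  · rw [fd_coeff_neg d m hm, if_neg (by omega), if_neg (by omega)]
    simp
  · obtain ⟨n, rfl⟩ := Int.eq_ofNat_of_zero_le hm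
    rw [fd_coeff_nat]
    have hdec : n = d * (n / d) + n % d := (Nat.div_add_mod n d).symm
    have hmod : n % d < d := Nat.mod_lt _ hd
    rcases Nat.lt_or_ge (n % d) 1 with hr | hr1
    · -- r = 0, d ∣ n
      have hr0 : n % d = 0 := by omega
      have hdvd : (d : ℤ) ∣ (n : ℤ) := by
        exact_mod_cast Int.natCast_dvd_natCast.mpr (Nat.dvd_of_mod_eq_zero hr0)
      rw [if_pos ⟨hdvd, hm⟩]
      have hnd : (n : ℤ).toNat / d = n / d := by simp
      rw [hnd]
      have hnot : ¬ ((d : ℤ) ∣ ((n : ℤ) - 1) ∧ 0 ≤ (n : ℤ) - 1) := by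
        rintro ⟨hdvd1, hge⟩
        have h1n : 1 ≤ n := by omega
        have hdn : d ∣ n := Nat.dvd_of_mod_eq_zero hr0
        have hcast : ((n - 1 : ℕ) : ℤ) = (n : ℤ) - 1 := by omega
        have hdn1 : d ∣ n - 1 := Int.natCast_dvd_natCast.mp (by rw [hcast]; exact hdvd1)
        have hsub := Nat.dvd_sub hdn hdn1
        rw [Nat.sub_sub_self h1n] at hsub
        have := Nat.le_of_dvd one_pos hsub
        omega
      rw [if_neg hnot, sub_zero]
      conv_lhs => rw [hdec, hr0, Nat.add_zero, tm_mul hd2]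
    · rcases Nat.lt_or_ge (n % d) 2 with hr | hr2
      · -- r = 1
        have hr1' : n % d = 1 := by omega
        have hnot : ¬ ((d : ℤ) ∣ (n : ℤ) ∧ 0 ≤ (n : ℤ)) := by
          rintro ⟨hdvd, -⟩
          have : d ∣ n := by exact_mod_cast hdvd
          rw [Nat.dvd_iff_mod_eq_zero] at this
          omega
        rw [if_neg hnot]
        have h1n : 1 ≤ n := by omega
        have hdvd : (d : ℤ) ∣ ((n : ℤ) - 1) := by
          have hh : d ∣ (n - 1) := ⟨n / d, by omega⟩
          have hcast : ((n - 1 : ℕ) : ℤ) = (n : ℤ) - 1 := by omega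
          have := Int.natCast_dvd_natCast.mpr hh
          rwa [hcast] at this
        rw [if_pos ⟨hdvd, by omega⟩]
        have htn : ((n : ℤ) - 1).toNat / d = n / d := by
          rw [show ((n : ℤ) - 1).toNat = n - 1 by omega]
          have : n - 1 = d * (n / d) := by omega
          rw [this, Nat.mul_div_cancel_left _ hd]
        rw [htn]
        conv_lhs => rw [hdec, hr1', tm_succ hd2]
        ring
      · -- r ≥ 2
        have hnot1 : ¬ ((d : ℤ) ∣ (n : ℤ) ∧ 0 ≤ (n : ℤ)) := by
          rintro ⟨hdvd, -⟩
          have : d ∣ n := by exact_mod_cast hdvd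
          rw [Nat.dvd_iff_mod_eq_zero] at this
          omega
        have hnot2 : ¬ ((d : ℤ) ∣ ((n : ℤ) - 1) ∧ 0 ≤ (n : ℤ) - 1) := by
          rintro ⟨hdvd, hge⟩
          have h1n : 1 ≤ n := by omega
          have hcast : ((n - 1 : ℕ) : ℤ) = (n : ℤ) - 1 := by omega
          have hd2' : d ∣ (n - 1) := Int.natCast_dvd_natCast.mp (by rw [hcast]; exact hdvd)
          have hmod0 : (n - 1) % d = 0 := Nat.mod_eq_zero_of_dvd hd2'
          have heq : (n - 1) % d = n % d - 1 := by
            conv_lhs => rw [show n - 1 = d * (n / d) + (n % d - 1) by omega]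
            rw [Nat.mul_add_mod]
            exact Nat.mod_eq_of_lt (by omega)
          omega
        rw [if_neg hnot1, if_neg hnot2, sub_zero]
        conv_lhs => rw [hdec, tm_other hd2 (n / d) (n % d) hr2 hmod]


lemma sumPow_coeff_top (d : ℕ) (hd : 0 < d) : (sumPow d).coeff (d - 1) = 1 := by
  rw [sumPow, Polynomial.finset_sum_coeff, Finset.sum_eq_single (d - 1)]
  · simp [Polynomial.coeff_X_pow]
  · intro i hi hne
    rw [Polynomial.coeff_X_pow, if_neg (Ne.symm hne)]
  · intro hmem
    exact absurd (Finset.mem_range.mpr (by omega)) hmem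

lemma sumPow_ne_zero (d : ℕ) (hd : 0 < d) : sumPow d ≠ 0 := by
  intro h
  have := sumPow_coeff_top d hd
  rw [h] at this
  simp at this

lemma sumPow_natDegree (d : ℕ) (hd : 0 < d) : (sumPow d).natDegree = d - 1 := by
  refine le_antisymm ?_ ?_
  · apply Polynomial.natDegree_sum_le_of_forall_le
    intro i hi
    rw [Polynomial.natDegree_X_pow]
    exact Nat.le_sub_one_of_lt (Finset.mem_range.mp hi)
  · apply Polynomial.le_natDegree_of_ne_zero
    rw [sumPow_coeff_top d hd]
    exact one_ne_zero

lemma key (d : ℕ) (hd2 : 2 ≤ d) (hd : 0 < d) :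
    substHom d hd (ud d) = polyToLS (sumPow d) * gd d := by
  set y : LaurentSeries ℚ := HahnSeries.single (1 : ℤ) 1 with hy
  have hsub : substHom d hd (ud d)
      = (1 - HahnSeries.single (d : ℤ) 1) * substHom d hd (fd d) := by
    rw [ud, map_mul, map_sub, map_one, ← hy, hy, substHom_single]
    norm_num
  have hS : polyToLS (sumPow d) = ∑ i ∈ Finset.range d, HahnSeries.single (-(i : ℤ)) 1 := by
    rw [polyToLS, sumPow, map_sum]
    refine Finset.sum_congr rfl fun i _ => ?_
    rw [map_pow, Polynomial.aeval_X, xL_pow]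
  have hSd : polyToLS (sumPow d) * HahnSeries.single ((d : ℤ) - 1) 1
      = ∑ j ∈ Finset.range d, y ^ j := by
    rw [hS, Finset.sum_mul, ← Finset.sum_range_reflect (fun j => y ^ j) d]
    refine Finset.sum_congr rfl fun i hi => ?_
    rw [Finset.mem_range] at hi
    rw [HahnSeries.single_mul_single, one_mul, hy, HahnSeries.single_pow, one_pow]
    congr 1
    simp only [nsmul_eq_mul, mul_one]
    push_cast [Nat.cast_sub (by omega : i ≤ d - 1), Nat.cast_sub (by omega : 1 ≤ d)]
    congr 1
    ring
  have hgeom : (1 - y) * (∑ j ∈ Finset.range d, y ^ j) = 1 - y ^ d := by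
    have hg := geom_sum_mul y d
    linear_combination -hg
  have hyd : y ^ d = HahnSeries.single (d : ℤ) 1 := by
    rw [hy, HahnSeries.single_pow, one_pow]
    congr 1
    simp
  rw [hsub, gd, ← mul_assoc, hSd]
  conv_rhs => rw [fd_eq d hd2 hd]
  rw [← hy, ← hyd, ← hgeom]
  ring


lemma polyToLS_comp (d : ℕ) (hd : 0 < d) (r : ℚ[X]) :
    polyToLS (r.comp (X ^ d)) = substHom d hd (polyToLS r) := by
  have h1 : polyToLS (r.comp (X ^ d)) = Polynomial.aeval (xL ^ d) r := by
    rw [polyToLS, Polynomial.aeval_comp, map_pow, Polynomial.aeval_X]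
  have hxd : substHom d hd xL = xL ^ d := by
    rw [xL_pow, xL, substHom_single]
    congr 1
    ring
  have h2 : substHom d hd (polyToLS r) = Polynomial.aeval (xL ^ d) r := by
    rw [polyToLS, Polynomial.aeval_def, Polynomial.aeval_def, Polynomial.hom_eval₂, hxd]
    congr 1
    exact Subsingleton.elim _ _
  rw [h1, h2]

lemma order_inv (u : LaurentSeries ℚ) (hu : u ≠ 0) : (u⁻¹).order = -u.order := by
  have h := HahnSeries.order_mul hu (inv_ne_zero hu)
  rw [mul_inv_cancel₀ hu, HahnSeries.order_one] at h
  omega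

end MyAux

-- STATEMENT 3 (Lemma 2): convergents of `u_d` produce convergents of `g_d`.
open MyAux in
/-- Lemma 2: convergents of `u_d` produce convergents of `g_d`. -/
theorem convergents_from_ud (d : ℕ) (hd2 : 2 ≤ d) (p q : ℚ[X])
    (hpq : IsCoprime p q) (hq : q ≠ 0) (c : ℤ) (hc : 0 < c)
    (h : ldeg (ud d - polyToLS p / polyToLS q) = -2 * (q.natDegree : ℤ) - c) :
    ldeg (gd d - polyToLS (p.comp (X ^ d)) / polyToLS (sumPow d * q.comp (X ^ d)))
        = -2 * ((d : ℤ) * (q.natDegree : ℤ) + (d : ℤ) - 1) - ((d : ℤ) * (c - 1) + 1) ∧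
      (IsCoprime (p.comp (X ^ d)) (sumPow d * q.comp (X ^ d)) ↔ ¬ (X - 1 ∣ p)) := by
  have hd : 0 < d := by omega
  set w : LaurentSeries ℚ := ud d - polyToLS p / polyToLS q with hw
  have hw0 : w ≠ 0 := by
    intro h0
    rw [h0] at h
    rw [ldeg, HahnSeries.order_zero] at h
    have : (0 : ℤ) ≤ (q.natDegree : ℤ) := by positivity
    omega
  have hqne : polyToLS q ≠ 0 := polyToLS_ne_zero hq
  have hSne : sumPow d ≠ 0 := sumPow_ne_zero d hd
  have hSLne : polyToLS (sumPow d) ≠ 0 := polyToLS_ne_zero hSne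
  constructor
  · have hmain : gd d - polyToLS (p.comp (X ^ d)) / polyToLS (sumPow d * q.comp (X ^ d))
        = substHom d hd w / polyToLS (sumPow d) := by
      have hgd : gd d = substHom d hd (ud d) / polyToLS (sumPow d) := by
        rw [key d hd2 hd]
        field_simp
      have hqcne : polyToLS (q.comp (X ^ d)) ≠ 0 := by
        rw [polyToLS_comp d hd]
        exact substHom_ne_zero d hd hqne
      have hmul : polyToLS (sumPow d * q.comp (X ^ d))
          = polyToLS (sumPow d) * polyToLS (q.comp (X ^ d)) := by
        rw [polyToLS, polyToLS, polyToLS, map_mul]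
      have hR : substHom d hd w
          = substHom d hd (ud d) - substHom d hd (polyToLS p) / substHom d hd (polyToLS q) := by
        rw [hw, map_sub, map_div₀]
      rw [hR, sub_div, hgd, hmul, polyToLS_comp d hd p, polyToLS_comp d hd q, div_div,
        mul_comm (substHom d hd (polyToLS q)) (polyToLS (sumPow d))]
    rw [hmain, ldeg, div_eq_mul_inv,
      HahnSeries.order_mul (substHom_ne_zero d hd hw0) (inv_ne_zero hSLne),
      order_substHom d hd hw0, order_inv _ hSLne, order_polyToLS hSne,
      sumPow_natDegree d hd]
    have hwo : w.order = 2 * (q.natDegree : ℤ) + c := by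
      rw [ldeg] at h
      omega
    rw [hwo]
    have hcast : ((d - 1 : ℕ) : ℤ) = (d : ℤ) - 1 := by omega
    rw [hcast]
    ring
  · have hco : IsCoprime (p.comp (X ^ d)) (q.comp (X ^ d)) := by
      have hm := hpq.map (Polynomial.aeval (X ^ d : ℚ[X])).toRingHom
      simpa [← Polynomial.comp_eq_aeval] using hm
    have hXd : (X : ℚ[X]) ^ d - 1 = (X - 1) * sumPow d := by
      have hg := geom_sum_mul (X : ℚ[X]) d
      rw [sumPow]
      linear_combination -hg
    have hSnotunit : ¬ IsUnit (sumPow d) := by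
      apply Polynomial.not_isUnit_of_natDegree_pos
      rw [sumPow_natDegree d hd]
      omega
    constructor
    · intro hcop hdvd
      obtain ⟨r, hr⟩ := hdvd
      have hSdvd : sumPow d ∣ p.comp (X ^ d) := by
        refine ⟨(X - 1) * r.comp (X ^ d), ?_⟩
        rw [hr, Polynomial.mul_comp, Polynomial.sub_comp, Polynomial.X_comp,
          Polynomial.one_comp, hXd]
        ring
      exact hSnotunit (hcop.isUnit_of_dvd' hSdvd (dvd_mul_right _ _))
    · intro hnd
      have he : p.eval 1 ≠ 0 := by
        intro h0
        apply hnd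
        have := Polynomial.dvd_iff_isRoot.mpr h0
        simpa using this
      set e := p.eval 1 with hee
      have hdv : (X : ℚ[X]) - 1 ∣ p - C e := by
        have hroot : (p - C e).IsRoot 1 := by simp [hee]
        have := Polynomial.dvd_iff_isRoot.mpr hroot
        simpa using this
      obtain ⟨r, hr⟩ := hdv
      have hpc : p.comp (X ^ d) = C e + sumPow d * ((X - 1) * r.comp (X ^ d)) := by
        have hp' : p = C e + (X - 1) * r := by rw [← hr]; ring
        rw [hp', Polynomial.add_comp, Polynomial.C_comp, Polynomial.mul_comp,
          Polynomial.sub_comp, Polynomial.X_comp, Polynomial.one_comp, hXd]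
        ring
      rw [IsCoprime.mul_right_iff]
      refine ⟨?_, hco⟩
      rw [hpc]
      have hce : IsCoprime (C e : ℚ[X]) (sumPow d) :=
        ⟨C e⁻¹, 0, by rw [zero_mul, add_zero, ← Polynomial.C_mul, inv_mul_cancel₀ he,
          Polynomial.C_1]⟩
      exact hce.add_mul_left_left _
end
end

section
/- Let d ≥ 2 be an integer. If there exist coprime polynomials p, q ∈ ℚ[x], q ≠ 0, with ‖g_d − p/q‖ ≤ −2‖q‖ − d (i.e., g_d has a convergent whose rate of approximation is at least d, equivalently a partial quotient of degree at least d), then g_d is well approximable. -/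
open Polynomial

noncomputable section

namespace BadApproxAux


lemma order_eq_of {x : LaurentSeries ℚ} {a : ℤ} (h1 : x.coeff a ≠ 0)
    (h0 : ∀ b < a, x.coeff b = 0) : x.order = a := by
  refine le_antisymm (HahnSeries.order_le_of_coeff_ne_zero h1) ?_
  by_contra hlt
  push_neg at hlt
  exact (mt HahnSeries.coeff_order_eq_zero.mp (HahnSeries.ne_zero_of_coeff_ne_zero h1)) (h0 _ hlt)

lemma fd_coeff_nat (d n : ℕ) : (fd d).coeff (n : ℤ) = tmCoeff d n := by
  rw [fd, HahnSeries.ofPowerSeries_apply_coeff]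
  simp

lemma fd_coeff_neg (d : ℕ) {n : ℤ} (hn : n < 0) : (fd d).coeff n = 0 := by
  rw [fd, HahnSeries.ofPowerSeries_apply]
  apply HahnSeries.embDomain_notin_range
  rintro ⟨k, hk⟩
  simp at hk
  omega

def dmul (d : ℕ) : ℤ →+ ℤ := AddMonoidHom.mk' (fun n => (d : ℤ) * n) (fun a b => by ring)

lemma dmul_inj {d : ℕ} (hd : 0 < d) : Function.Injective (dmul d) := by
  intro a b hab
  have hdz : (d : ℤ) ≠ 0 := by exact_mod_cast hd.ne'
  exact mul_left_cancel₀ hdz hab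

lemma dmul_le {d : ℕ} (hd : 0 < d) : ∀ g g' : ℤ, dmul d g ≤ dmul d g' ↔ g ≤ g' := by
  intro g g'
  have hdz : (0 : ℤ) < d := by exact_mod_cast hd
  exact ⟨fun h => le_of_mul_le_mul_left h hdz, fun h => mul_le_mul_of_nonneg_left h hdz.le⟩

def sigma (d : ℕ) (hd : 0 < d) : LaurentSeries ℚ →+* LaurentSeries ℚ :=
  HahnSeries.embDomainRingHom (dmul d) (dmul_inj hd) (dmul_le hd)

lemma sigma_def (d : ℕ) (hd : 0 < d) (u : LaurentSeries ℚ) :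
    sigma d hd u = HahnSeries.embDomain ⟨⟨dmul d, dmul_inj hd⟩, dmul_le hd _ _⟩ u := rfl

lemma substPow_eq (d : ℕ) (hd : 0 < d) (u : LaurentSeries ℚ) :
    substPow d u = sigma d hd u := by
  rw [substPow, dif_pos hd, sigma_def]
  congr 1

lemma sigma_coeff (d : ℕ) (hd : 0 < d) (u : LaurentSeries ℚ) (n : ℤ) :
    (sigma d hd u).coeff ((d : ℤ) * n) = u.coeff n := by
  rw [sigma_def]
  exact HahnSeries.embDomain_coeff

lemma sigma_coeff_zero (d : ℕ) (hd : 0 < d) (u : LaurentSeries ℚ) {m : ℤ}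
    (hm : ¬ (d : ℤ) ∣ m) : (sigma d hd u).coeff m = 0 := by
  rw [sigma_def]
  apply HahnSeries.embDomain_notin_range
  rintro ⟨k, hk⟩
  exact hm ⟨k, hk.symm⟩

lemma sigma_single (d : ℕ) (hd : 0 < d) (a : ℤ) (r : ℚ) :
    sigma d hd (HahnSeries.single a r) = HahnSeries.single ((d : ℤ) * a) r := by
  rw [sigma_def]
  exact HahnSeries.embDomain_single

lemma sigma_ne_zero (d : ℕ) (hd : 0 < d) {u : LaurentSeries ℚ} (hu : u ≠ 0) :
    sigma d hd u ≠ 0 := by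
  intro h
  apply mt HahnSeries.coeff_order_eq_zero.mp hu
  have h2 := sigma_coeff d hd u u.order
  rw [h] at h2
  simpa using h2.symm

lemma sigma_order (d : ℕ) (hd : 0 < d) {u : LaurentSeries ℚ} (hu : u ≠ 0) :
    (sigma d hd u).order = (d : ℤ) * u.order := by
  apply order_eq_of
  · rw [sigma_coeff]
    exact mt HahnSeries.coeff_order_eq_zero.mp hu
  · intro b hb
    by_cases hdvd : (d : ℤ) ∣ b
    · obtain ⟨a, rfl⟩ := hdvd
      rw [sigma_coeff]
      apply HahnSeries.coeff_eq_zero_of_lt_order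
      have hdz : (0 : ℤ) < d := by exact_mod_cast hd
      exact lt_of_mul_lt_mul_left hb hdz.le
    · exact sigma_coeff_zero d hd u hdvd



lemma algebraMap_LS (a : ℚ) :
    (algebraMap ℚ (LaurentSeries ℚ)) a = HahnSeries.single (0 : ℤ) a := by
  rw [show (algebraMap ℚ (LaurentSeries ℚ)) a
      = HahnSeries.ofPowerSeries ℤ ℚ (algebraMap ℚ (PowerSeries ℚ) a) from rfl,
    PowerSeries.algebraMap_apply, Algebra.algebraMap_self, RingHom.id_apply,
    HahnSeries.ofPowerSeries_C, HahnSeries.C_apply]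

lemma xL_pow (k : ℕ) : xL ^ k = HahnSeries.single (-(k : ℤ)) 1 := by
  rw [xL, HahnSeries.single_pow]
  simp

lemma polyToLS_coeff (q : ℚ[X]) (m : ℤ) :
    (polyToLS q).coeff m = if m ≤ 0 then q.coeff (-m).toNat else 0 := by
  induction q using Polynomial.induction_on' with
  | add p r hp hr =>
      rw [polyToLS, map_add, HahnSeries.coeff_add]
      rw [polyToLS] at hp hr
      rw [hp, hr, Polynomial.coeff_add]
      split <;> simp
  | monomial n a =>
      rw [polyToLS, Polynomial.aeval_monomial, xL_pow]
      rw [algebraMap_LS, HahnSeries.single_mul_single, zero_add, mul_one]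
      rw [HahnSeries.coeff_single, Polynomial.coeff_monomial]
      split_ifs <;> first | rfl | (exfalso; omega)

lemma polyToLS_ne_zero {q : ℚ[X]} (hq : q ≠ 0) : polyToLS q ≠ 0 := by
  intro h
  have h2 := polyToLS_coeff q (-(q.natDegree : ℤ))
  rw [h] at h2
  simp only [HahnSeries.coeff_zero, neg_neg, Int.toNat_natCast] at h2
  rw [if_pos (by omega)] at h2
  exact Polynomial.leadingCoeff_ne_zero.mpr hq h2.symm

lemma polyToLS_order {q : ℚ[X]} (hq : q ≠ 0) :
    (polyToLS q).order = -(q.natDegree : ℤ) := by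
  apply order_eq_of
  · rw [polyToLS_coeff, if_pos (by omega)]
    simpa using Polynomial.leadingCoeff_ne_zero.mpr hq
  · intro b hb
    rw [polyToLS_coeff]
    split
    · apply Polynomial.coeff_eq_zero_of_natDegree_lt
      omega
    · rfl

lemma tmCoeff_zero (d : ℕ) : tmCoeff d 0 = 1 := by simp [tmCoeff]

lemma tmCoeff_mul (d : ℕ) (hd : 2 ≤ d) (m : ℕ) : tmCoeff d (d * m) = tmCoeff d m := by
  rcases Nat.eq_zero_or_pos m with rfl | hm
  · simp
  · rw [tmCoeff, tmCoeff, Nat.digits_def' (by omega : 1 < d) (Nat.mul_pos (by omega) hm)]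
    rw [Nat.mul_mod_right, Nat.mul_div_cancel_left _ (by omega : 0 < d)]
    simp

lemma tmCoeff_mul_add_one (d : ℕ) (hd : 2 ≤ d) (m : ℕ) :
    tmCoeff d (d * m + 1) = -tmCoeff d m := by
  rw [tmCoeff, tmCoeff, Nat.digits_def' (by omega : 1 < d) (by omega)]
  have h1 : (d * m + 1) % d = 1 := by
    rw [Nat.mul_add_mod]
    exact Nat.mod_eq_of_lt (by omega)
  have h2 : (d * m + 1) / d = m := by
    rw [Nat.mul_add_div (by omega)]
    simp [Nat.div_eq_of_lt (show 1 < d by omega)]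
  rw [h1, h2]
  simp only [List.all_cons, List.sum_cons]
  split_ifs with h h' h' <;> simp_all [pow_add]
  all_goals (have h' : ¬ ∀ x ∈ d.digits m, x ≤ 1 := by push_neg; exact h
             simp only [if_neg h', neg_zero])

lemma tmCoeff_big (d : ℕ) (hd : 2 ≤ d) (m r : ℕ) (h2 : 2 ≤ r) (hr : r < d) :
    tmCoeff d (d * m + r) = 0 := by
  rw [tmCoeff, Nat.digits_def' (by omega : 1 < d) (by omega)]
  have h1 : (d * m + r) % d = r := by
    rw [Nat.mul_add_mod]
    exact Nat.mod_eq_of_lt hr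
  rw [h1, if_neg]
  intro hcond
  simp only [List.all_cons, Bool.and_eq_true, decide_eq_true_eq] at hcond
  omega

lemma tm_rec (d : ℕ) (hd2 : 2 ≤ d) (k : ℕ) (hk : 1 ≤ k) :
    tmCoeff d k = (if d ∣ k then tmCoeff d (k / d) else 0)
      - (if d ∣ (k - 1) then tmCoeff d ((k - 1) / d) else 0) := by
  obtain ⟨m, r, hr, rfl⟩ : ∃ m r, r < d ∧ k = d * m + r :=
    ⟨k / d, k % d, Nat.mod_lt _ (by omega), by
      have := Nat.div_add_mod k d; omega⟩
  have hd0 : 0 < d := by omega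
  have hd1 : ¬ d ∣ 1 := fun h => by have := Nat.le_of_dvd one_pos h; omega
  rcases Nat.lt_or_ge r 2 with hlt | hge
  · interval_cases r
    · -- r = 0
      have hm : 1 ≤ m := by
        rcases Nat.eq_zero_or_pos m with rfl | h
        · omega
        · exact h
      have hdvd : d ∣ d * m + 0 := ⟨m, by ring⟩
      have hnd : ¬ d ∣ (d * m + 0 - 1) := by
        intro h
        have h2 : d ∣ (d * m + 0) - (d * m + 0 - 1) := Nat.dvd_sub hdvd h
        have h3 : (d * m + 0) - (d * m + 0 - 1) = 1 := by
          have : 1 ≤ d * m := Nat.one_le_iff_ne_zero.mpr (by positivity)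
          omega
        rw [h3] at h2
        exact hd1 h2
      have hq : (d * m + 0) / d = m := by
        rw [add_zero, Nat.mul_div_cancel_left _ hd0]
      rw [if_pos hdvd, if_neg hnd, sub_zero, hq, add_zero]
      exact tmCoeff_mul d hd2 m
    · -- r = 1
      have hsub : d * m + 1 - 1 = d * m := by omega
      have hdvd : d ∣ (d * m + 1 - 1) := by rw [hsub]; exact ⟨m, rfl⟩
      have hnd : ¬ d ∣ (d * m + 1) := by
        intro h
        have h2 : d ∣ (d * m + 1) - d * m := Nat.dvd_sub h ⟨m, rfl⟩
        have h3 : (d * m + 1) - d * m = 1 := by omega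
        rw [h3] at h2
        exact hd1 h2
      have hq : (d * m + 1 - 1) / d = m := by
        rw [hsub, Nat.mul_div_cancel_left _ hd0]
      rw [if_neg hnd, if_pos hdvd, hq, zero_sub]
      exact tmCoeff_mul_add_one d hd2 m
  · -- r ≥ 2
    have hnd : ¬ d ∣ (d * m + r) := by
      intro h
      have h2 : d ∣ (d * m + r) - d * m := Nat.dvd_sub h ⟨m, rfl⟩
      have h3 : (d * m + r) - d * m = r := by omega
      rw [h3] at h2
      have := Nat.le_of_dvd (by omega) h2
      omega
    have hnd' : ¬ d ∣ (d * m + r - 1) := by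
      intro h
      have hsub : d * m + r - 1 = d * m + (r - 1) := by omega
      rw [hsub] at h
      have h2 : d ∣ (d * m + (r - 1)) - d * m := Nat.dvd_sub h ⟨m, rfl⟩
      have h3 : (d * m + (r - 1)) - d * m = r - 1 := by omega
      rw [h3] at h2
      have := Nat.le_of_dvd (by omega) h2
      omega
    rw [if_neg hnd, if_neg hnd', sub_zero]
    exact tmCoeff_big d hd2 m r hge hr


lemma polyToLS_monomial (n : ℕ) (a : ℚ) :
    polyToLS (Polynomial.monomial n a) = HahnSeries.single (-(n : ℤ)) a := by
  rw [polyToLS, Polynomial.aeval_monomial, xL_pow, algebraMap_LS,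
    HahnSeries.single_mul_single, zero_add, mul_one]

lemma sigma_polyToLS (d : ℕ) (hd : 0 < d) (q : ℚ[X]) :
    sigma d hd (polyToLS q) = polyToLS (q.comp (X ^ d)) := by
  induction q using Polynomial.induction_on' with
  | add p r hp hr =>
      have h1 : polyToLS (p + r) = polyToLS p + polyToLS r := map_add (Polynomial.aeval xL) p r
      have h2 : polyToLS (p.comp (X ^ d) + r.comp (X ^ d))
          = polyToLS (p.comp (X ^ d)) + polyToLS (r.comp (X ^ d)) :=
        map_add (Polynomial.aeval xL) _ _
      rw [h1, map_add, hp, hr, Polynomial.add_comp, h2]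
  | monomial n a =>
      have hcomp : (Polynomial.monomial n a).comp (X ^ d) = Polynomial.monomial (d * n) a := by
        rw [← Polynomial.C_mul_X_pow_eq_monomial, Polynomial.mul_comp, Polynomial.C_comp,
          Polynomial.pow_comp, Polynomial.X_comp, ← pow_mul, Polynomial.C_mul_X_pow_eq_monomial]
      rw [polyToLS_monomial, sigma_single, hcomp, polyToLS_monomial]
      congr 1
      push_cast
      ring

lemma single_one_mul_coeff (u : LaurentSeries ℚ) (n : ℤ) :
    (HahnSeries.single (1 : ℤ) 1 * u).coeff n = u.coeff (n - 1) := by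
  have h := HahnSeries.coeff_single_mul_add (r := (1 : ℚ)) (x := u) (a := n - 1) (b := (1 : ℤ))
  rw [one_mul] at h
  conv_lhs => rw [show n = (n - 1) + 1 by ring]
  exact h

lemma fd_funEq (d : ℕ) (hd2 : 2 ≤ d) :
    fd d = (1 - HahnSeries.single (1 : ℤ) 1) * substPow d (fd d) := by
  have hd0 : 0 < d := by omega
  rw [substPow_eq d hd0]
  ext n
  rw [sub_mul, one_mul, HahnSeries.coeff_sub, single_one_mul_coeff]
  have hco : ∀ m : ℤ, (sigma d hd0 (fd d)).coeff m
      = if (d : ℤ) ∣ m then (fd d).coeff (m / d) else 0 := by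
    intro m
    split_ifs with hdvd
    · obtain ⟨a, rfl⟩ := hdvd
      rw [Int.mul_ediv_cancel_left _ (by exact_mod_cast hd0.ne' : (d : ℤ) ≠ 0)]
      exact sigma_coeff d hd0 _ a
    · exact sigma_coeff_zero d hd0 _ hdvd
  rw [hco, hco]
  rcases lt_trichotomy n 0 with hn | rfl | hn
  · have e1 : ∀ m : ℤ, m < 0 → (if (d : ℤ) ∣ m then (fd d).coeff (m / d) else 0) = 0 := by
      intro m hm
      split_ifs with hdvd
      · exact fd_coeff_neg d (Int.ediv_neg_of_neg_of_pos hm (by exact_mod_cast hd0))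
      · rfl
    rw [fd_coeff_neg d hn, e1 n hn, e1 (n - 1) (by omega), sub_zero]
  · have hnd : ¬ (d : ℤ) ∣ ((0 : ℤ) - 1) := by
      intro hdvd
      have h2 : (d : ℤ) ∣ 1 := by
        rw [show ((0 : ℤ) - 1) = -1 by ring] at hdvd
        exact (dvd_neg).mp hdvd
      have := Int.le_of_dvd one_pos h2
      omega
    rw [if_pos (dvd_zero _), if_neg hnd, Int.zero_ediv, sub_zero]
  · obtain ⟨k, rfl⟩ := Int.eq_ofNat_of_zero_le hn.le
    have hk : 1 ≤ k := by exact_mod_cast hn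
    have hcast : ((k : ℤ) - 1) = ((k - 1 : ℕ) : ℤ) := by omega
    have c1 : ((k : ℤ)) / (d : ℤ) = ((k / d : ℕ) : ℤ) := (Int.natCast_ediv k d).symm
    have c2 : ((k : ℤ) - 1) / (d : ℤ) = (((k - 1) / d : ℕ) : ℤ) := by
      rw [hcast]; exact (Int.natCast_ediv (k - 1) d).symm
    have d1 : ((d : ℤ) ∣ (k : ℤ)) ↔ d ∣ k := Int.natCast_dvd_natCast
    have d2 : ((d : ℤ) ∣ ((k : ℤ) - 1)) ↔ d ∣ (k - 1) := by
      rw [hcast]; exact Int.natCast_dvd_natCast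
    rw [c1, c2, fd_coeff_nat, fd_coeff_nat, fd_coeff_nat]
    simp only [d1, d2]
    exact tm_rec d hd2 k hk

lemma fd_ne_zero (d : ℕ) : fd d ≠ 0 := by
  apply HahnSeries.ne_zero_of_coeff_ne_zero (g := ((0 : ℕ) : ℤ))
  rw [fd_coeff_nat, tmCoeff_zero]
  norm_num

lemma gd_funEq (d : ℕ) (hd2 : 2 ≤ d) :
    gd d = HahnSeries.single (-(((d : ℤ) - 1) ^ 2)) 1 *
      ((1 - HahnSeries.single (1 : ℤ) 1) * substPow d (gd d)) := by
  have hd0 : 0 < d := by omega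
  have E2 : substPow d (gd d)
      = HahnSeries.single ((d : ℤ) * ((d : ℤ) - 1)) 1 * substPow d (fd d) := by
    rw [gd, substPow_eq d hd0, substPow_eq d hd0, map_mul, sigma_single]
  rw [E2]
  have key : HahnSeries.single (-(((d : ℤ) - 1) ^ 2)) (1 : ℚ)
        * HahnSeries.single ((d : ℤ) * ((d : ℤ) - 1)) (1 : ℚ)
      = HahnSeries.single ((d : ℤ) - 1) 1 := by
    rw [HahnSeries.single_mul_single, mul_one]
    congr 1
    ring
  calc gd d = HahnSeries.single ((d : ℤ) - 1) 1
        * ((1 - HahnSeries.single (1 : ℤ) 1) * substPow d (fd d)) := by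
        rw [← fd_funEq d hd2, gd]
    _ = _ := by rw [← key]; ring

lemma one_sub_y_coeff (n : ℤ) : (1 - HahnSeries.single (1 : ℤ) 1 : LaurentSeries ℚ).coeff n
    = (if n = 0 then 1 else 0) - (if n = 1 then 1 else 0) := by
  rw [HahnSeries.coeff_sub, HahnSeries.coeff_one, HahnSeries.coeff_single]
  congr

lemma one_sub_y_ne_zero : (1 - HahnSeries.single (1 : ℤ) 1 : LaurentSeries ℚ) ≠ 0 := by
  apply HahnSeries.ne_zero_of_coeff_ne_zero (g := (0 : ℤ))
  rw [one_sub_y_coeff]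
  norm_num

lemma one_sub_y_order : (1 - HahnSeries.single (1 : ℤ) 1 : LaurentSeries ℚ).order = 0 := by
  apply order_eq_of
  · rw [one_sub_y_coeff]; norm_num
  · intro b hb
    rw [one_sub_y_coeff, if_neg (by omega), if_neg (by omega), sub_zero]

lemma xL_mul_one_sub : xL * (1 - HahnSeries.single (1 : ℤ) 1) = xL - 1 := by
  rw [mul_sub, mul_one, xL, HahnSeries.single_mul_single, mul_one,
    show (-1 + 1 : ℤ) = 0 by ring, HahnSeries.single_zero_one]

lemma s_eq (k : ℕ) :
    HahnSeries.single (-((k : ℤ) + 1)) (1 : ℚ) * (1 - HahnSeries.single (1 : ℤ) 1)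
      = xL ^ k * (xL - 1) := by
  rw [← xL_mul_one_sub, ← mul_assoc, ← pow_succ, xL_pow]
  norm_cast

lemma step (d : ℕ) (hd2 : 2 ≤ d) (P Q : ℚ[X]) (hQ : Q ≠ 0)
    (hne : gd d - polyToLS P / polyToLS Q ≠ 0) :
    ∃ P' Q' : ℚ[X], Q' ≠ 0 ∧ gd d - polyToLS P' / polyToLS Q' ≠ 0 ∧
      (Q'.natDegree : ℤ) = (d : ℤ) * Q.natDegree ∧
      ldeg (gd d - polyToLS P' / polyToLS Q') =
        ((d : ℤ) - 1) ^ 2 + (d : ℤ) * ldeg (gd d - polyToLS P / polyToLS Q) := by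
  have hd0 : 0 < d := by omega
  set k : ℕ := (d - 1) ^ 2 - 1 with hkdef
  have hnat : k + 1 = (d - 1) ^ 2 := by
    have h1 : 1 ≤ (d - 1) ^ 2 := Nat.one_le_pow _ _ (by omega)
    omega
  have hk1 : ((k : ℤ) + 1) = ((d : ℤ) - 1) ^ 2 := by
    zify [show (1 : ℕ) ≤ d by omega] at hnat
    rw [← hnat]
  set e := gd d - polyToLS P / polyToLS Q with hedef
  have hQ'eq : polyToLS (Q.comp (X ^ d)) = sigma d hd0 (polyToLS Q) :=
    (sigma_polyToLS d hd0 Q).symm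
  have hPL : polyToLS (X ^ k * (X - 1) * P.comp (X ^ d))
      = xL ^ k * (xL - 1) * sigma d hd0 (polyToLS P) := by
    simp only [polyToLS, map_mul, map_pow, map_sub, map_one, Polynomial.aeval_X]
    congr 1
    exact (sigma_polyToLS d hd0 P).symm
  have hsval : HahnSeries.single (-(((d : ℤ) - 1) ^ 2)) (1 : ℚ)
      * (1 - HahnSeries.single (1 : ℤ) 1) = xL ^ k * (xL - 1) := by
    rw [← hk1]
    exact s_eq k
  have hsigq : sigma d hd0 (polyToLS Q) ≠ 0 :=
    sigma_ne_zero d hd0 (polyToLS_ne_zero hQ)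
  have key : gd d - polyToLS (X ^ k * (X - 1) * P.comp (X ^ d))
        / polyToLS (Q.comp (X ^ d))
      = HahnSeries.single (-(((d : ℤ) - 1) ^ 2)) 1
        * ((1 - HahnSeries.single (1 : ℤ) 1) * sigma d hd0 e) := by
    conv_lhs => rw [gd_funEq d hd2]
    rw [hPL, hQ'eq, substPow_eq d hd0]
    rw [show sigma d hd0 e = sigma d hd0 (gd d)
        - sigma d hd0 (polyToLS P) / sigma d hd0 (polyToLS Q) by
      rw [hedef, map_sub, map_div₀]]
    rw [← hsval]
    field_simp
  have hsigE : sigma d hd0 e ≠ 0 := sigma_ne_zero d hd0 hne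
  have hprodne : HahnSeries.single (-(((d : ℤ) - 1) ^ 2)) (1 : ℚ)
      * ((1 - HahnSeries.single (1 : ℤ) 1) * sigma d hd0 e) ≠ 0 :=
    mul_ne_zero (HahnSeries.single_ne_zero one_ne_zero)
      (mul_ne_zero one_sub_y_ne_zero hsigE)
  refine ⟨X ^ k * (X - 1) * P.comp (X ^ d), Q.comp (X ^ d), ?_, ?_, ?_, ?_⟩
  · intro h0
    apply hsigq
    rw [← hQ'eq, h0, polyToLS, map_zero]
  · rw [key]
    exact hprodne
  · rw [Polynomial.natDegree_comp, Polynomial.natDegree_X_pow]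
    push_cast
    ring
  · rw [key, ldeg, HahnSeries.order_mul (HahnSeries.single_ne_zero one_ne_zero)
      (mul_ne_zero one_sub_y_ne_zero hsigE),
      HahnSeries.order_mul one_sub_y_ne_zero hsigE,
      HahnSeries.order_single one_ne_zero, one_sub_y_order, sigma_order d hd0 hne, ldeg]
    ring

end BadApproxAux

/-- Lemma 4: if `g_d` has a convergent whose rate of approximation is at least `d`,
then `g_d` is well approximable. -/
theorem wellApprox_of_large_rate (d : ℕ) (hd2 : 2 ≤ d) (p q : ℚ[X])
    (hpq : IsCoprime p q) (hq : q ≠ 0)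
    (h : ldeg (gd d - polyToLS p / polyToLS q) ≤ -2 * (q.natDegree : ℤ) - (d : ℤ)) :
    wellApprox (gd d) := by
  have hD : (2 : ℤ) ≤ (d : ℤ) := by exact_mod_cast hd2
  have main : ∀ n : ℕ, ∃ P Q : ℚ[X], Q ≠ 0 ∧ gd d - polyToLS P / polyToLS Q ≠ 0 ∧
      ldeg (gd d - polyToLS P / polyToLS Q) ≤ -2 * (Q.natDegree : ℤ) - d - n := by
    intro n
    induction n with
    | zero =>
        refine ⟨p, q, hq, ?_, by simpa using h⟩
        intro h0
        rw [h0] at h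
        rw [ldeg, HahnSeries.order_zero, neg_zero] at h
        have hq0 : (0 : ℤ) ≤ (q.natDegree : ℤ) := Int.natCast_nonneg _
        linarith
    | succ n ih =>
        obtain ⟨P, Q, hQ, hne, hle⟩ := ih
        obtain ⟨P', Q', hQ', hne', hdeg, hld⟩ := BadApproxAux.step d hd2 P Q hQ hne
        refine ⟨P', Q', hQ', hne', ?_⟩
        rw [hld, hdeg]
        have hq0 : (0 : ℤ) ≤ (Q.natDegree : ℤ) := Int.natCast_nonneg _
        have hn0 : (0 : ℤ) ≤ (n : ℤ) := Int.natCast_nonneg _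
        have hmul : (d : ℤ) * ldeg (gd d - polyToLS P / polyToLS Q)
            ≤ (d : ℤ) * (-2 * (Q.natDegree : ℤ) - d - n) :=
          mul_le_mul_of_nonneg_left hle (by linarith)
        push_cast
        nlinarith [hmul, hD, hq0, hn0]
  intro C
  obtain ⟨P, Q, hQ, _, hle⟩ := main (C + 1 - d).toNat
  refine ⟨P, Q, hQ, ?_⟩
  have htn : C + 1 - d ≤ ((C + 1 - d).toNat : ℤ) := Int.self_le_toNat _
  calc ldeg (gd d - polyToLS P / polyToLS Q)
      ≤ -2 * (Q.natDegree : ℤ) - d - (C + 1 - d).toNat := hle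
    _ < -2 * (Q.natDegree : ℤ) - C := by omega
end
end

section
/- Let d ≥ 2 be an integer. If the Laurent series f_d is badly approximable, then all partial quotients of h_d and of u_d are linear; that is, there exist no coprime polynomials p, q ∈ ℚ[x], q ≠ 0, with ‖h_d − p/q‖ ≤ −2‖q‖ − 2, and no coprime polynomials p, q ∈ ℚ[x], q ≠ 0, with ‖u_d − p/q‖ ≤ −2‖q‖ − 2. -/
open Polynomial

noncomputable section

section Aux
namespace TMAux

open HahnSeries

abbrev K := LaurentSeries ℚ
lemma order_eq_of_forall {v : K} {n : ℤ} (h0 : v.coeff n ≠ 0)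
    (hlt : ∀ g, g < n → v.coeff g = 0) : v.order = n := by
  refine le_antisymm (order_le_of_coeff_ne_zero h0) ?_
  by_contra hc
  push_neg at hc
  exact (coeff_order_eq_zero.not.mpr (ne_zero_of_coeff_ne_zero h0)) (hlt _ hc)

lemma ldeg_mul {a b : K} (ha : a ≠ 0) (hb : b ≠ 0) : ldeg (a * b) = ldeg a + ldeg b := by
  unfold ldeg; rw [order_mul ha hb]; ring

lemma ldeg_div {a b : K} (ha : a ≠ 0) (hb : b ≠ 0) : ldeg (a / b) = ldeg a - ldeg b := by
  have h : a / b ≠ 0 := div_ne_zero ha hb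
  have : (a / b) * b = a := div_mul_cancel₀ a hb
  have := ldeg_mul h hb
  rw [div_mul_cancel₀ a hb] at this
  linarith

lemma ldeg_single {a : ℤ} {r : ℚ} (hr : r ≠ 0) : ldeg (single a r : K) = -a := by
  unfold ldeg; rw [order_single hr]

lemma one_sub_single_coeff_zero {k : ℤ} (hk : k ≠ 0) :
    ((1 : K) - single k 1).coeff 0 = 1 := by
  rw [HahnSeries.coeff_sub, HahnSeries.coeff_one, coeff_single_of_ne (by simpa using (Ne.symm hk))]
  simp

lemma one_sub_single_ne_zero {k : ℤ} (hk : k ≠ 0) : ((1 : K) - single k 1) ≠ 0 :=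
  ne_zero_of_coeff_ne_zero (by rw [one_sub_single_coeff_zero hk]; norm_num)

lemma ldeg_one_sub_single {k : ℤ} (hk : 0 < k) : ldeg ((1 : K) - single k 1) = 0 := by
  unfold ldeg
  rw [order_eq_of_forall (n := 0) (by rw [one_sub_single_coeff_zero hk.ne']; norm_num) ?_]
  · ring
  intro g hg
  rw [HahnSeries.coeff_sub, HahnSeries.coeff_one, coeff_single_of_ne (by omega), if_neg (by omega)]
  ring

lemma xL_pow (n : ℕ) : xL ^ n = (single (-(n : ℤ)) 1 : K) := by
  rw [xL, single_pow]
  simp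

lemma single_one_mul (a b : ℤ) : (single a 1 : K) * single b 1 = single (a + b) 1 := by
  rw [single_mul_single, one_mul]

lemma xL_mul_y : xL * (single 1 1 : K) = 1 := by
  rw [xL, single_one_mul]
  norm_num [single_zero_one]

lemma xL_ne_zero : xL ≠ 0 := single_ne_zero one_ne_zero

end TMAux
section Part2
namespace TMAux
open HahnSeries

variable {d : ℕ}

def mulHom (d : ℕ) : ℤ →+ ℤ := AddMonoidHom.mk' (fun n : ℤ => (d : ℤ) * n) (fun a b => mul_add _ _ _)

lemma mulHom_inj (hd1 : 1 ≤ d) : Function.Injective (mulHom d) := by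
  intro a b h
  have hd0 : (d : ℤ) ≠ 0 := by exact_mod_cast Nat.one_le_iff_ne_zero.mp hd1
  exact mul_left_cancel₀ hd0 h

lemma mulHom_le (hd1 : 1 ≤ d) : ∀ g g' : ℤ, mulHom d g ≤ mulHom d g' ↔ g ≤ g' := by
  intro g g'
  have hd0 : (0 : ℤ) < d := by exact_mod_cast hd1
  exact mul_le_mul_iff_of_pos_left hd0

def emb (d : ℕ) (hd1 : 1 ≤ d) : (ℤ ↪o ℤ) := ⟨⟨⇑(mulHom d), mulHom_inj hd1⟩, mulHom_le hd1 _ _⟩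

def SdR (d : ℕ) (hd1 : 1 ≤ d) : K →+* K :=
  HahnSeries.embDomainRingHom (mulHom d) (mulHom_inj hd1) (mulHom_le hd1)

lemma SdR_apply (hd1 : 1 ≤ d) (u : K) : SdR d hd1 u = embDomain (emb d hd1) u := rfl

lemma emb_apply (hd1 : 1 ≤ d) (a : ℤ) : emb d hd1 a = (d : ℤ) * a := rfl

lemma substPow_eq (hd1 : 1 ≤ d) (u : K) : substPow d u = SdR d hd1 u := by
  unfold substPow
  rw [dif_pos (by omega : 0 < d), SdR_apply]
  congr 1

lemma SdR_coeff_mul (hd1 : 1 ≤ d) (u : K) (a : ℤ) :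
    (SdR d hd1 u).coeff ((d : ℤ) * a) = u.coeff a := by
  rw [SdR_apply, ← emb_apply hd1 a]
  exact embDomain_coeff

lemma SdR_coeff_nmul (hd1 : 1 ≤ d) (u : K) {g : ℤ} (h : ¬ ∃ a : ℤ, (d : ℤ) * a = g) :
    (SdR d hd1 u).coeff g = 0 := by
  rw [SdR_apply]
  exact embDomain_notin_range (by simpa [Set.mem_range, emb_apply hd1] using h)

lemma SdR_single (hd1 : 1 ≤ d) (a : ℤ) (r : ℚ) :
    SdR d hd1 (single a r) = single ((d : ℤ) * a) r := by
  rw [SdR_apply]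
  exact embDomain_single

lemma SdR_ne_zero (hd1 : 1 ≤ d) {u : K} (hu : u ≠ 0) : SdR d hd1 u ≠ 0 := by
  intro h
  rw [SdR_apply] at h
  exact hu (embDomain_injective (by rw [h]; exact embDomain_zero.symm))

lemma SdR_order (hd1 : 1 ≤ d) {u : K} (hu : u ≠ 0) :
    (SdR d hd1 u).order = (d : ℤ) * u.order := by
  refine order_eq_of_forall ?_ ?_
  · rw [SdR_coeff_mul]
    exact coeff_order_eq_zero.not.mpr hu
  · intro g hg
    by_cases h : ∃ a : ℤ, (d : ℤ) * a = g
    · obtain ⟨a, rfl⟩ := h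
      rw [SdR_coeff_mul]
      apply coeff_eq_zero_of_lt_order
      have hd0 : (0 : ℤ) < d := by exact_mod_cast hd1
      exact lt_of_mul_lt_mul_left hg (le_of_lt hd0)
    · exact SdR_coeff_nmul hd1 u h

lemma SdR_ldeg (hd1 : 1 ≤ d) {u : K} (hu : u ≠ 0) :
    ldeg (SdR d hd1 u) = (d : ℤ) * ldeg u := by
  unfold ldeg
  rw [SdR_order hd1 hu]
  ring

end TMAux
end Part2
section Part3
namespace TMAux
open HahnSeries

lemma coeff_sum {α : Type*} (s : Finset α) (f : α → K) (g : ℤ) :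
    (∑ i ∈ s, f i).coeff g = ∑ i ∈ s, (f i).coeff g :=
  map_sum (coeff.addMonoidHom g) f s

lemma algebraMap_eq_single (r : ℚ) : algebraMap ℚ K r = single 0 r := by
  rw [HahnSeries.algebraMap_apply' (Γ := ℤ) (R := ℚ)]
  have h : algebraMap ℚ (PowerSeries ℚ) r = PowerSeries.C r := rfl
  rw [h, HahnSeries.ofPowerSeries_C, HahnSeries.C_apply]

lemma polyToLS_eq_sum (q : ℚ[X]) :
    polyToLS q = ∑ i ∈ Finset.range (q.natDegree + 1), single (-(i : ℤ)) (q.coeff i) := by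
  unfold polyToLS
  rw [Polynomial.aeval_eq_sum_range]
  refine Finset.sum_congr rfl fun i _ => ?_
  rw [xL_pow, Algebra.smul_def, algebraMap_eq_single, single_mul_single, zero_add, mul_one]

lemma polyToLS_coeff (q : ℚ[X]) (i : ℕ) : (polyToLS q).coeff (-(i : ℤ)) = q.coeff i := by
  rw [polyToLS_eq_sum, coeff_sum]
  by_cases hi : i ≤ q.natDegree
  · rw [Finset.sum_eq_single i]
    · rw [coeff_single_same]
    · intro b _ hb
      exact coeff_single_of_ne (by exact_mod_cast fun h => hb (by omega))
    · intro h
      exact absurd (Finset.mem_range.2 (by omega)) h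
  · rw [Polynomial.coeff_eq_zero_of_natDegree_lt (by omega)]
    apply Finset.sum_eq_zero
    intro b hb
    apply coeff_single_of_ne
    have hb' : b ≤ q.natDegree := by simpa [Nat.lt_succ_iff] using Finset.mem_range.1 hb
    intro h
    have : (b : ℤ) = (i : ℤ) := by omega
    omega

lemma polyToLS_coeff_support (q : ℚ[X]) {g : ℤ} (h : (polyToLS q).coeff g ≠ 0) :
    ∃ i : ℕ, i ≤ q.natDegree ∧ g = -(i : ℤ) := by
  rw [polyToLS_eq_sum, coeff_sum] at h
  obtain ⟨i, hi, hne⟩ := Finset.exists_ne_zero_of_sum_ne_zero h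
  have : g = -(i : ℤ) := by
    by_contra hg
    exact hne (coeff_single_of_ne hg)
  exact ⟨i, by simpa [Nat.lt_succ_iff] using Finset.mem_range.1 hi, this⟩

lemma polyToLS_ne_zero {q : ℚ[X]} (hq : q ≠ 0) : polyToLS q ≠ 0 := by
  apply ne_zero_of_coeff_ne_zero (g := -(q.natDegree : ℤ))
  rw [polyToLS_coeff]
  exact Polynomial.leadingCoeff_ne_zero.mpr hq

lemma polyToLS_order {q : ℚ[X]} (hq : q ≠ 0) : (polyToLS q).order = -(q.natDegree : ℤ) := by
  refine le_antisymm (order_le_of_coeff_ne_zero ?_) ?_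
  · rw [polyToLS_coeff]
    exact Polynomial.leadingCoeff_ne_zero.mpr hq
  · obtain ⟨i, hi, hg⟩ := polyToLS_coeff_support q (coeff_order_eq_zero.not.mpr (polyToLS_ne_zero hq))
    rw [hg]
    omega

lemma polyToLS_ldeg {q : ℚ[X]} (hq : q ≠ 0) : ldeg (polyToLS q) = (q.natDegree : ℤ) := by
  unfold ldeg
  rw [polyToLS_order hq]
  ring

lemma polyToLS_zero_iff {q : ℚ[X]} : polyToLS q = 0 ↔ q = 0 := by
  constructor
  · intro h
    by_contra hq
    exact polyToLS_ne_zero hq h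
  · rintro rfl
    exact map_zero _

lemma SdR_polyToLS {d : ℕ} (hd1 : 1 ≤ d) (q : ℚ[X]) :
    SdR d hd1 (polyToLS q) = polyToLS (q.comp (X ^ d)) := by
  unfold polyToLS
  rw [Polynomial.aeval_comp]
  rw [Polynomial.aeval_def, Polynomial.aeval_def, Polynomial.hom_eval₂]
  have h1 : (SdR d hd1).comp (algebraMap ℚ K) = algebraMap ℚ K := by
    refine RingHom.ext fun r => ?_
    rw [RingHom.comp_apply, algebraMap_eq_single, SdR_single, mul_zero]
  rw [h1]
  congr 1
  rw [map_pow, Polynomial.aeval_X, xL_pow, xL, SdR_single]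
  congr 1
  push_cast
  ring

end TMAux
end Part3
section Part4
namespace TMAux
open HahnSeries

variable {d : ℕ}

lemma tm_zero (d : ℕ) : tmCoeff d 0 = 1 := by
  simp [tmCoeff]

lemma not_dvd_helper {d a k r : ℤ} (hd : 2 ≤ d) (h : d * a = d * k + r)
    (h1 : 0 < r) (h2 : r < d) : False := by
  have hh : d * (a - k) = r := by linear_combination h
  have hdvd : d ∣ r := ⟨a - k, hh.symm⟩
  have := Int.le_of_dvd h1 hdvd
  omega

lemma digits_eq (hd2 : 2 ≤ d) {k r : ℕ} (hr : r < d) (hpos : 0 < d * k + r) :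
    Nat.digits d (d * k + r) = r :: Nat.digits d k := by
  rw [Nat.digits_def' (by omega : 1 < d) hpos, Nat.mul_add_mod, Nat.mod_eq_of_lt hr,
    Nat.mul_add_div (by omega : 0 < d), Nat.div_eq_of_lt hr, Nat.add_zero]

lemma tm_mul (hd2 : 2 ≤ d) (k : ℕ) : tmCoeff d (d * k) = tmCoeff d k := by
  rcases Nat.eq_zero_or_pos k with rfl | hk
  · simp
  · unfold tmCoeff
    rw [show d * k = d * k + 0 by ring, digits_eq hd2 (by omega) (by positivity)]
    simp

lemma tm_mul_add_one (hd2 : 2 ≤ d) (k : ℕ) : tmCoeff d (d * k + 1) = -tmCoeff d k := by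
  unfold tmCoeff
  rw [digits_eq hd2 (by omega) (by omega)]
  simp only [List.all_cons, List.sum_cons]
  by_cases h : (Nat.digits d k).all (· ≤ 1)
  · simp only [h, Bool.and_true]
    norm_num [_root_.pow_add]
  · simp [h]

lemma tm_mul_add (hd2 : 2 ≤ d) (k r : ℕ) (hr2 : 2 ≤ r) (hrd : r < d) :
    tmCoeff d (d * k + r) = 0 := by
  unfold tmCoeff
  rw [digits_eq hd2 hrd (by omega)]
  rw [if_neg]
  simp only [List.all_cons, Bool.and_eq_true]
  rintro ⟨h1, -⟩
  simp at h1
  omega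

lemma fd_coeff_nat (d : ℕ) (n : ℕ) : (fd d).coeff (n : ℤ) = tmCoeff d n := by
  unfold fd
  rw [ofPowerSeries_apply_coeff]
  simp

lemma fd_coeff_neg (d : ℕ) {g : ℤ} (hg : g < 0) : (fd d).coeff g = 0 := by
  unfold fd
  rw [ofPowerSeries_apply]
  apply embDomain_notin_range
  rintro ⟨n, hn⟩
  change ((n : ℕ) : ℤ) = _ at hn
  omega

lemma fd_ne_zero (d : ℕ) : fd d ≠ 0 :=
  ne_zero_of_coeff_ne_zero (g := 0)
    (by rw [show (0:ℤ) = ((0:ℕ):ℤ) from rfl, fd_coeff_nat, tm_zero]; norm_num)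

lemma FE (hd2 : 2 ≤ d) :
    fd d = (1 - single (1:ℤ) 1) * SdR d (by omega) (fd d) := by
  set S := SdR d (by omega : 1 ≤ d) (fd d) with hS
  have hdZ : (2:ℤ) ≤ (d:ℤ) := by exact_mod_cast hd2
  ext g
  have hsub : ((1 - single (1:ℤ) 1) * S).coeff g = S.coeff g - S.coeff (g - 1) := by
    rw [sub_mul, one_mul, HahnSeries.coeff_sub]
    congr 1
    have h := coeff_single_mul_add (r := (1:ℚ)) (x := S) (a := g - 1) (b := 1)
    rw [show (g - 1) + (1:ℤ) = g by ring] at h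
    rw [h, one_mul]
  rw [hsub]
  rcases lt_or_ge g 0 with hg | hg
  · rw [fd_coeff_neg d hg]
    have h1 : S.coeff g = 0 := by
      by_cases h : ∃ a : ℤ, (d : ℤ) * a = g
      · obtain ⟨a, rfl⟩ := h
        rw [hS, SdR_coeff_mul]
        exact fd_coeff_neg d (by nlinarith)
      · rw [hS]; exact SdR_coeff_nmul _ _ h
    have h2 : S.coeff (g - 1) = 0 := by
      by_cases h : ∃ a : ℤ, (d : ℤ) * a = g - 1
      · obtain ⟨a, ha⟩ := h
        rw [hS, ← ha, SdR_coeff_mul]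
        exact fd_coeff_neg d (by nlinarith)
      · rw [hS]; exact SdR_coeff_nmul _ _ h
    rw [h1, h2]; ring
  · obtain ⟨n, rfl⟩ : ∃ n : ℕ, g = (n : ℤ) := ⟨g.toNat, by omega⟩
    obtain ⟨k, r, hrd, hn⟩ : ∃ k r : ℕ, r < d ∧ n = d * k + r :=
      ⟨n / d, n % d, Nat.mod_lt _ (by omega), (Nat.div_add_mod n d).symm⟩
    have hcast : ((n : ℤ)) = (d : ℤ) * (k : ℤ) + (r : ℤ) := by exact_mod_cast hn
    rcases Nat.lt_or_ge r 2 with hr2 | hr2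
    · interval_cases r
      · -- r = 0
        have h1 : S.coeff (n : ℤ) = tmCoeff d k := by
          rw [hS, show ((n:ℤ)) = (d:ℤ) * (k:ℤ) by omega, SdR_coeff_mul, fd_coeff_nat]
        have h2 : S.coeff ((n : ℤ) - 1) = 0 := by
          rw [hS]
          apply SdR_coeff_nmul
          rintro ⟨a, ha⟩
          exact not_dvd_helper hdZ (a := (k:ℤ)) (k := a) (r := 1) (by omega) one_pos (by omega)
        rw [h1, h2, fd_coeff_nat, hn, add_zero, tm_mul hd2]
        ring
      · -- r = 1
        have h1 : S.coeff (n : ℤ) = 0 := by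
          rw [hS]
          apply SdR_coeff_nmul
          rintro ⟨a, ha⟩
          exact not_dvd_helper hdZ (a := a) (k := k) (r := 1) (by omega) one_pos (by omega)
        have h2 : S.coeff ((n : ℤ) - 1) = tmCoeff d k := by
          rw [hS, show ((n:ℤ)) - 1 = (d:ℤ) * (k:ℤ) by omega, SdR_coeff_mul, fd_coeff_nat]
        rw [h1, h2, fd_coeff_nat, hn, tm_mul_add_one hd2]
        ring
    · have h1 : S.coeff (n : ℤ) = 0 := by
        rw [hS]
        apply SdR_coeff_nmul
        rintro ⟨a, ha⟩
        exact not_dvd_helper hdZ (a := a) (k := k) (r := (r:ℤ)) (by omega) (by omega) (by omega)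
      have h2 : S.coeff ((n : ℤ) - 1) = 0 := by
        rw [hS]
        apply SdR_coeff_nmul
        rintro ⟨a, ha⟩
        exact not_dvd_helper hdZ (a := a) (k := k) (r := (r:ℤ) - 1) (by omega) (by omega) (by omega)
      rw [h1, h2, fd_coeff_nat, hn, tm_mul_add hd2 k r hr2 hrd]
      ring

end TMAux
end Part4
section Part5
namespace TMAux
open HahnSeries

variable {d : ℕ}

lemma polyToLS_mul (a b : ℚ[X]) : polyToLS (a * b) = polyToLS a * polyToLS b :=
  map_mul (Polynomial.aeval xL) a b

lemma polyToLS_sub (a b : ℚ[X]) : polyToLS (a - b) = polyToLS a - polyToLS b :=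
  map_sub (Polynomial.aeval xL) a b

lemma polyToLS_one : polyToLS 1 = 1 := map_one (Polynomial.aeval xL)

lemma polyToLS_X : polyToLS X = xL := Polynomial.aeval_X xL

lemma polyToLS_pow (a : ℚ[X]) (n : ℕ) : polyToLS (a ^ n) = polyToLS a ^ n :=
  map_pow (Polynomial.aeval xL) a n

lemma ldeg_zero : ldeg 0 = 0 := by unfold ldeg; rw [order_zero]; ring

lemma SdR_xL (h1 : 1 ≤ d) : SdR d h1 xL = xL ^ d := by
  rw [xL_pow, xL, SdR_single]
  congr 1
  push_cast
  ring

lemma FE2 (hd2 : 2 ≤ d) (h1 : 1 ≤ d) :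
    fd d = (1 - single (1:ℤ) 1) *
      ((1 - single (d:ℤ) 1) * SdR d h1 (SdR d h1 (fd d))) := by
  have hS : SdR d h1 (fd d) = (1 - single (d:ℤ) 1) * SdR d h1 (SdR d h1 (fd d)) := by
    have h := congrArg (SdR d h1) (FE hd2)
    rw [map_mul, map_sub, map_one, SdR_single, mul_one] at h
    exact h
  nth_rewrite 1 [FE hd2]
  nth_rewrite 1 [hS]
  rfl

def Good (d : ℕ) (a : ℤ) : Prop :=
  ∃ p q : ℚ[X], polyToLS q ≠ 0 ∧ fd d - polyToLS p / polyToLS q ≠ 0 ∧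
    ldeg (fd d - polyToLS p / polyToLS q) + 2 * (q.natDegree : ℤ) ≤ a

lemma good_mono {a b : ℤ} (h : Good d a) (hab : a ≤ b) : Good d b := by
  obtain ⟨p, q, h1, h2, h3⟩ := h
  exact ⟨p, q, h1, h2, h3.trans hab⟩

lemma good_step (hd2 : 2 ≤ d) {a : ℤ} (h : Good d a) (ha : a ≤ 0) : Good d (2 * a + 2) := by
  have h1 : (1:ℕ) ≤ d := by omega
  obtain ⟨p, q, hQ, hne, hbound⟩ := h
  set P := polyToLS p with hP
  set Q := polyToLS q with hQdef
  set v := fd d - P / Q with hv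
  have hy1 : ((1:K) - single (1:ℤ) 1) ≠ 0 := one_sub_single_ne_zero one_ne_zero
  have hq' : polyToLS (X * q.comp (X ^ d)) = xL * SdR d h1 Q := by
    rw [polyToLS_mul, polyToLS_X, SdR_polyToLS]
  have hp' : polyToLS ((X - 1) * p.comp (X ^ d)) = (xL - 1) * SdR d h1 P := by
    rw [polyToLS_mul, polyToLS_sub, polyToLS_X, polyToLS_one, SdR_polyToLS]
  have hSQ : SdR d h1 Q ≠ 0 := SdR_ne_zero h1 hQ
  have hxl1 : xL - 1 = xL * (1 - single (1:ℤ) 1) := by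
    rw [mul_sub, mul_one, xL_mul_y]
  have key : fd d - polyToLS ((X - 1) * p.comp (X ^ d)) / polyToLS (X * q.comp (X ^ d)) =
      (1 - single (1:ℤ) 1) * SdR d h1 v := by
    rw [hp', hq', hxl1]
    rw [mul_assoc, mul_div_mul_left _ _ xL_ne_zero]
    rw [hv, map_sub, map_div₀]
    nth_rewrite 1 [FE hd2]
    ring
  have hvS : SdR d h1 v ≠ 0 := SdR_ne_zero h1 hne
  refine ⟨(X - 1) * p.comp (X ^ d), X * q.comp (X ^ d), ?_, ?_, ?_⟩
  · rw [hq']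
    exact mul_ne_zero xL_ne_zero hSQ
  · rw [key]
    exact mul_ne_zero hy1 hvS
  · rw [key, ldeg_mul hy1 hvS, ldeg_one_sub_single one_pos, SdR_ldeg h1 hne, zero_add]
    have hdeg : ((X * q.comp (X ^ d)).natDegree : ℤ) ≤ 1 + (d:ℤ) * (q.natDegree : ℤ) := by
      have hle : (X * q.comp (X ^ d)).natDegree ≤ 1 + q.natDegree * d := by
        refine Polynomial.natDegree_mul_le.trans ?_
        have h2 := Polynomial.natDegree_comp_le (p := q) (q := (X:ℚ[X]) ^ d)
        rw [Polynomial.natDegree_X_pow] at h2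
        simp only [Polynomial.natDegree_X]
        omega
      calc ((X * q.comp (X ^ d)).natDegree : ℤ) ≤ ((1 + q.natDegree * d : ℕ) : ℤ) := by
            exact_mod_cast hle
        _ = 1 + (d:ℤ) * (q.natDegree : ℤ) := by push_cast; ring
    have hdZ : (2:ℤ) ≤ (d:ℤ) := by exact_mod_cast hd2
    have hmul : (d:ℤ) * (ldeg v + 2 * (q.natDegree : ℤ)) ≤ (d:ℤ) * a :=
      mul_le_mul_of_nonneg_left hbound (by linarith)
    have hda : (d:ℤ) * a ≤ 2 * a := by nlinarith
    linarith

lemma good_start_h (hd2 : 2 ≤ d) (p q : ℚ[X]) (hq : q ≠ 0)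
    (he : ldeg (hd d - polyToLS p / polyToLS q) ≤ -2 * (q.natDegree : ℤ) - 2) :
    Good d (-4) := by
  have h1 : (1:ℕ) ≤ d := by omega
  have hdZ : (2:ℤ) ≤ (d:ℤ) := by exact_mod_cast hd2
  set P := polyToLS p with hP
  set Q := polyToLS q with hQdef
  set v := hd d - P / Q with hv
  have hm0 : (0:ℤ) ≤ (q.natDegree : ℤ) := by positivity
  have hQ : Q ≠ 0 := polyToLS_ne_zero hq
  have hvne : v ≠ 0 := by
    intro h0
    rw [h0, ldeg_zero] at he
    omega
  set DD : ℤ := ((d * d : ℕ) : ℤ) with hDD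
  have hDDval : DD = (d:ℤ) * (d:ℤ) := by rw [hDD]; push_cast; ring
  have hDDpos : 0 < DD := by nlinarith
  have hexp : d * d - d - 1 + 1 + d = d * d := by
    have h4 : d + 1 ≤ d * d := by nlinarith
    omega
  have hy1 : ((1:K) - single (1:ℤ) 1) ≠ 0 := one_sub_single_ne_zero one_ne_zero
  have hyd : ((1:K) - single (d:ℤ) 1) ≠ 0 := one_sub_single_ne_zero (by omega)
  set N : LaurentSeries ℚ := (1 - single (1:ℤ) 1) * ((1 - single (d:ℤ) 1) * single (-DD) 1)
    with hN
  have hNne : N ≠ 0 := mul_ne_zero hy1 (mul_ne_zero hyd (single_ne_zero one_ne_zero))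
  have hcancel : single (-DD) (1:ℚ) * single DD 1 = 1 := by
    rw [single_mul_single]
    norm_num [single_zero_one]
  have hSSy : SdR d h1 (SdR d h1 (single (1:ℤ) (1:ℚ))) = single DD 1 := by
    rw [SdR_single, SdR_single, hDDval]
    norm_num
  have hfd : N * SdR d h1 (SdR d h1 (hd d)) = fd d := by
    calc N * SdR d h1 (SdR d h1 (hd d))
        = N * SdR d h1 (SdR d h1 (single (1:ℤ) 1 * fd d)) := rfl
      _ = N * (single DD 1 * SdR d h1 (SdR d h1 (fd d))) := by
          rw [map_mul, map_mul, hSSy]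
      _ = (single (-DD) (1:ℚ) * single DD 1) *
            ((1 - single (1:ℤ) 1) * ((1 - single (d:ℤ) 1) * SdR d h1 (SdR d h1 (fd d)))) := by
          rw [hN]; ring
      _ = (1 - single (1:ℤ) 1) * ((1 - single (d:ℤ) 1) * SdR d h1 (SdR d h1 (fd d))) := by
          rw [hcancel, one_mul]
      _ = fd d := (FE2 hd2 h1).symm
  have e2 : xL ^ d - 1 = xL ^ d * (1 - single (d:ℤ) 1) := by
    rw [mul_sub, mul_one, xL_pow, single_mul_single]
    norm_num [single_zero_one]
  have hxl1 : xL - 1 = xL * (1 - single (1:ℤ) 1) := by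
    rw [mul_sub, mul_one, xL_mul_y]
  have hexp2 : d * d - d - 1 + (d + 1) = d * d := by
    have h4 : d + 1 ≤ d * d := by nlinarith
    omega
  have e3 : xL ^ (d * d - d - 1) * (xL * xL ^ d) = single (-DD) 1 := by
    rw [← pow_succ', ← _root_.pow_add, hexp2, xL_pow, hDD]
  have hNfact : polyToLS ((X:ℚ[X]) ^ (d * d - d - 1) * ((X - 1) * (X ^ d - 1))) = N := by
    rw [polyToLS_mul, polyToLS_mul, polyToLS_sub, polyToLS_sub, polyToLS_pow, polyToLS_pow,
      polyToLS_X, polyToLS_one]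
    rw [hxl1, e2, hN]
    calc xL ^ (d * d - d - 1) * (xL * (1 - single (1:ℤ) 1) * (xL ^ d * (1 - single (d:ℤ) 1)))
        = (xL ^ (d * d - d - 1) * (xL * xL ^ d)) *
            ((1 - single (1:ℤ) 1) * (1 - single (d:ℤ) 1)) := by ring
      _ = single (-DD) 1 * ((1 - single (1:ℤ) 1) * (1 - single (d:ℤ) 1)) := by rw [e3]
      _ = (1 - single (1:ℤ) 1) * ((1 - single (d:ℤ) 1) * single (-DD) 1) := by ring
  have hq' : polyToLS ((q.comp (X ^ d)).comp (X ^ d)) = SdR d h1 (SdR d h1 Q) := by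
    rw [SdR_polyToLS, SdR_polyToLS]
  have hp' : polyToLS ((X ^ (d * d - d - 1) * ((X - 1) * (X ^ d - 1))) *
      ((p.comp (X ^ d)).comp (X ^ d))) = N * SdR d h1 (SdR d h1 P) := by
    rw [polyToLS_mul, hNfact, SdR_polyToLS, SdR_polyToLS]
  have hSSQ : SdR d h1 (SdR d h1 Q) ≠ 0 := SdR_ne_zero h1 (SdR_ne_zero h1 hQ)
  have hSSv : SdR d h1 (SdR d h1 v) ≠ 0 := SdR_ne_zero h1 (SdR_ne_zero h1 hvne)
  have key : fd d - polyToLS ((X ^ (d * d - d - 1) * ((X - 1) * (X ^ d - 1))) *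
        ((p.comp (X ^ d)).comp (X ^ d))) / polyToLS ((q.comp (X ^ d)).comp (X ^ d)) =
      N * SdR d h1 (SdR d h1 v) := by
    rw [hp', hq', hv, map_sub, map_sub, map_div₀, map_div₀, ← hfd]
    rw [mul_sub, mul_div_assoc]
  refine ⟨(X ^ (d * d - d - 1) * ((X - 1) * (X ^ d - 1))) * ((p.comp (X ^ d)).comp (X ^ d)),
    (q.comp (X ^ d)).comp (X ^ d), ?_, ?_, ?_⟩
  · rw [hq']; exact hSSQ
  · rw [key]; exact mul_ne_zero hNne hSSv
  · rw [key, ldeg_mul hNne hSSv, SdR_ldeg h1 (SdR_ne_zero h1 hvne), SdR_ldeg h1 hvne]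
    have hldegN : ldeg N = DD := by
      rw [hN, ldeg_mul hy1 (mul_ne_zero hyd (single_ne_zero one_ne_zero)),
        ldeg_mul hyd (single_ne_zero one_ne_zero), ldeg_one_sub_single one_pos,
        ldeg_one_sub_single (by omega : (0:ℤ) < (d:ℤ)), ldeg_single one_ne_zero]
      ring
    rw [hldegN]
    have hdeg : (((q.comp (X ^ d)).comp (X ^ d)).natDegree : ℤ) ≤
        (q.natDegree : ℤ) * ((d:ℤ) * (d:ℤ)) := by
      have hA := Polynomial.natDegree_comp_le (p := q.comp ((X:ℚ[X]) ^ d)) (q := (X:ℚ[X]) ^ d)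
      have hB := Polynomial.natDegree_comp_le (p := q) (q := (X:ℚ[X]) ^ d)
      rw [Polynomial.natDegree_X_pow] at hA hB
      have : ((q.comp (X ^ d)).comp ((X:ℚ[X]) ^ d)).natDegree ≤ q.natDegree * d * d :=
        hA.trans (by exact Nat.mul_le_mul_right d hB)
      calc (((q.comp (X ^ d)).comp ((X:ℚ[X]) ^ d)).natDegree : ℤ)
          ≤ ((q.natDegree * d * d : ℕ) : ℤ) := by exact_mod_cast this
        _ = (q.natDegree : ℤ) * ((d:ℤ) * (d:ℤ)) := by push_cast; ring
    have hmul : (d:ℤ) * ((d:ℤ) * ldeg v) ≤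
        (d:ℤ) * ((d:ℤ) * (-2 * (q.natDegree : ℤ) - 2)) := by
      apply mul_le_mul_of_nonneg_left _ (by linarith)
      exact mul_le_mul_of_nonneg_left he (by linarith)
    nlinarith [hmul, hdeg, hDDval, hDDpos, hm0, hdZ]
end TMAux
end Part5
section Part6
namespace TMAux
open HahnSeries

variable {d : ℕ}

lemma good_start_u (hd2 : 2 ≤ d) (p q : ℚ[X]) (hq : q ≠ 0)
    (he : ldeg (ud d - polyToLS p / polyToLS q) ≤ -2 * (q.natDegree : ℤ) - 2) :
    Good d (-4) := by
  have h1 : (1:ℕ) ≤ d := by omega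
  have hdZ : (2:ℤ) ≤ (d:ℤ) := by exact_mod_cast hd2
  set P := polyToLS p with hP
  set Q := polyToLS q with hQdef
  set v := ud d - P / Q with hv
  have hm0 : (0:ℤ) ≤ (q.natDegree : ℤ) := by positivity
  have hQ : Q ≠ 0 := polyToLS_ne_zero hq
  have hvne : v ≠ 0 := by
    intro h0
    rw [h0, ldeg_zero] at he
    omega
  set DD : ℤ := ((d * d : ℕ) : ℤ) with hDD
  have hDDval : DD = (d:ℤ) * (d:ℤ) := by rw [hDD]; push_cast; ring
  have hDDpos : 0 < DD := by nlinarith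
  have hy1 : ((1:K) - single (1:ℤ) 1) ≠ 0 := one_sub_single_ne_zero one_ne_zero
  have hyd : ((1:K) - single (d:ℤ) 1) ≠ 0 := one_sub_single_ne_zero (by omega)
  have hyDD : ((1:K) - single DD 1) ≠ 0 := one_sub_single_ne_zero (by omega)
  have e2 : xL ^ d - 1 = xL ^ d * (1 - single (d:ℤ) 1) := by
    rw [mul_sub, mul_one, xL_pow, single_mul_single]
    norm_num [single_zero_one]
  have e2' : xL ^ (d * d) - 1 = xL ^ (d * d) * (1 - single DD 1) := by
    rw [mul_sub, mul_one, xL_pow, hDD, single_mul_single]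
    norm_num [single_zero_one]
  have hxl1 : xL - 1 = xL * (1 - single (1:ℤ) 1) := by
    rw [mul_sub, mul_one, xL_mul_y]
  -- the polynomial s(x^d) and its Laurent incarnation B
  set B : LaurentSeries ℚ := polyToLS ((sumPow d).comp (X ^ d)) with hB
  have geo : polyToLS (sumPow d) * (xL - 1) = xL ^ d - 1 := by
    have hpoly : (sumPow d) * (X - 1) = (X:ℚ[X]) ^ d - 1 := by
      unfold sumPow
      exact geom_sum_mul (X : ℚ[X]) d
    have := congrArg polyToLS hpoly
    rw [polyToLS_mul, polyToLS_sub, polyToLS_sub, polyToLS_pow, polyToLS_X, polyToLS_one] at this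
    exact this
  have geoB : B * (xL ^ d - 1) = xL ^ (d * d) - 1 := by
    have h := congrArg (SdR d h1) geo
    rw [map_mul, map_sub, map_sub, map_one, map_pow, SdR_xL, SdR_polyToLS, ← pow_mul] at h
    rw [hB]
    exact h
  have hxinv : xL ^ (d * d) * single DD (1:ℚ) = 1 := by
    rw [xL_pow, hDD, single_mul_single]
    norm_num [single_zero_one]
  have hBkey : B * (1 - single (d:ℤ) 1) = single ((d:ℤ) - DD) 1 * (1 - single DD 1) := by
    have hxd : xL ^ d * single ((d:ℤ)) (1:ℚ) = 1 := by
      rw [xL_pow, single_mul_single]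
      norm_num [single_zero_one]
    calc B * (1 - single (d:ℤ) 1)
        = (B * (xL ^ d * single ((d:ℤ)) 1)) * (1 - single (d:ℤ) 1) := by rw [hxd, mul_one]
      _ = (B * (xL ^ d * (1 - single (d:ℤ) 1))) * single ((d:ℤ)) 1 := by ring
      _ = (B * (xL ^ d - 1)) * single ((d:ℤ)) 1 := by rw [← e2]
      _ = (xL ^ (d * d) - 1) * single ((d:ℤ)) 1 := by rw [geoB]
      _ = (xL ^ (d * d) * (1 - single DD 1)) * single ((d:ℤ)) 1 := by rw [← e2']
      _ = (xL ^ (d * d) * single ((d:ℤ)) 1) * (1 - single DD 1) := by ring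
      _ = single ((d:ℤ) - DD) 1 * (1 - single DD 1) := by
          rw [xL_pow, hDD, single_mul_single, one_mul]
          congr 2
          push_cast
          ring
  have hBne : B ≠ 0 := by
    intro h0
    rw [h0, zero_mul] at hBkey
    exact (mul_ne_zero (single_ne_zero one_ne_zero) hyDD) hBkey.symm
  have hldegB : ldeg B = DD - (d:ℤ) := by
    have := ldeg_mul hBne hyd
    rw [hBkey, ldeg_mul (single_ne_zero one_ne_zero) hyDD, ldeg_single one_ne_zero,
      ldeg_one_sub_single (by omega : (0:ℤ) < DD), ldeg_one_sub_single
      (by omega : (0:ℤ) < (d:ℤ))] at this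
    linarith
  -- A
  set A : LaurentSeries ℚ := polyToLS ((X:ℚ[X]) ^ (d * d - d - 1) * (X - 1)) with hA
  have hexp3 : d * d - d - 1 + 1 = d * d - d := by
    have h4 : d + 1 ≤ d * d := by nlinarith
    omega
  have hcastsub : (-(((d * d - d : ℕ)) : ℤ)) = (d:ℤ) - DD := by
    have h5 : d ≤ d * d := by nlinarith
    rw [hDD]
    push_cast [Nat.cast_sub h5]
    ring
  have hAfact : A = single ((d:ℤ) - DD) 1 * (1 - single (1:ℤ) 1) := by
    rw [hA, polyToLS_mul, polyToLS_sub, polyToLS_pow, polyToLS_X, polyToLS_one, hxl1,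
      ← mul_assoc, ← pow_succ, hexp3, xL_pow, hcastsub]
  have hAne : A ≠ 0 := by
    rw [hAfact]
    exact mul_ne_zero (single_ne_zero one_ne_zero) hy1
  have hldegA : ldeg A = DD - (d:ℤ) := by
    rw [hAfact, ldeg_mul (single_ne_zero one_ne_zero) hy1, ldeg_single one_ne_zero,
      ldeg_one_sub_single one_pos]
    ring
  -- functional equation for ud
  have hSSud : SdR d h1 (SdR d h1 (ud d)) = (1 - single DD 1) * SdR d h1 (SdR d h1 (fd d)) := by
    have hud : ud d = (1 - single (1:ℤ) 1) * fd d := rfl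
    rw [hud, map_mul, map_mul, map_sub, map_sub, map_one, map_one, SdR_single, SdR_single,
      show (d:ℤ) * ((d:ℤ) * (1:ℤ)) = DD by rw [hDDval]; ring]
  have hfd : B * fd d = A * SdR d h1 (SdR d h1 (ud d)) := by
    rw [hSSud, hAfact]
    nth_rewrite 1 [FE2 hd2 h1]
    calc B * ((1 - single (1:ℤ) 1) * ((1 - single (d:ℤ) 1) * SdR d h1 (SdR d h1 (fd d))))
        = (B * (1 - single (d:ℤ) 1)) * ((1 - single (1:ℤ) 1) * SdR d h1 (SdR d h1 (fd d))) := by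
          ring
      _ = (single ((d:ℤ) - DD) 1 * (1 - single DD 1)) *
            ((1 - single (1:ℤ) 1) * SdR d h1 (SdR d h1 (fd d))) := by rw [hBkey]
      _ = single ((d:ℤ) - DD) 1 * (1 - single (1:ℤ) 1) *
            ((1 - single DD 1) * SdR d h1 (SdR d h1 (fd d))) := by ring
  have hSSQ : SdR d h1 (SdR d h1 Q) ≠ 0 := SdR_ne_zero h1 (SdR_ne_zero h1 hQ)
  have hSSv : SdR d h1 (SdR d h1 v) ≠ 0 := SdR_ne_zero h1 (SdR_ne_zero h1 hvne)
  have hq' : polyToLS (((sumPow d).comp (X ^ d)) * ((q.comp (X ^ d)).comp (X ^ d))) =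
      B * SdR d h1 (SdR d h1 Q) := by
    rw [polyToLS_mul, SdR_polyToLS, SdR_polyToLS, hB]
  have hp' : polyToLS (((X:ℚ[X]) ^ (d * d - d - 1) * (X - 1)) * ((p.comp (X ^ d)).comp (X ^ d)))
      = A * SdR d h1 (SdR d h1 P) := by
    rw [polyToLS_mul, SdR_polyToLS, SdR_polyToLS, hA]
  have hfd' : fd d = (A / B) * SdR d h1 (SdR d h1 (ud d)) := by
    rw [div_mul_eq_mul_div, eq_div_iff hBne]
    rw [mul_comm (fd d) B, hfd]
  have key : fd d - polyToLS (((X:ℚ[X]) ^ (d * d - d - 1) * (X - 1)) *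
        ((p.comp (X ^ d)).comp (X ^ d))) /
        polyToLS (((sumPow d).comp (X ^ d)) * ((q.comp (X ^ d)).comp (X ^ d))) =
      (A / B) * SdR d h1 (SdR d h1 v) := by
    rw [hp', hq', hv, map_sub, map_sub, map_div₀, map_div₀, hfd']
    rw [mul_sub]
    congr 1
    rw [div_mul_div_comm]
  have hABne : A / B ≠ 0 := div_ne_zero hAne hBne
  refine ⟨((X:ℚ[X]) ^ (d * d - d - 1) * (X - 1)) * ((p.comp (X ^ d)).comp (X ^ d)),
    ((sumPow d).comp (X ^ d)) * ((q.comp (X ^ d)).comp (X ^ d)), ?_, ?_, ?_⟩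
  · rw [hq']; exact mul_ne_zero hBne hSSQ
  · rw [key]; exact mul_ne_zero hABne hSSv
  · rw [key, ldeg_mul hABne hSSv, ldeg_div hAne hBne, hldegA, hldegB,
      SdR_ldeg h1 (SdR_ne_zero h1 hvne), SdR_ldeg h1 hvne]
    have hsum : (sumPow d).natDegree ≤ d - 1 := by
      unfold sumPow
      refine Polynomial.natDegree_sum_le_of_forall_le _ _ fun i hi => ?_
      rw [Polynomial.natDegree_X_pow]
      have := Finset.mem_range.1 hi
      omega
    have hdeg : ((((sumPow d).comp (X ^ d)) * ((q.comp (X ^ d)).comp (X ^ d))).natDegree : ℤ) ≤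
        ((d:ℤ) - 1) * (d:ℤ) + (q.natDegree : ℤ) * ((d:ℤ) * (d:ℤ)) := by
      have hA1 := Polynomial.natDegree_comp_le (p := sumPow d) (q := (X:ℚ[X]) ^ d)
      have hA2 := Polynomial.natDegree_comp_le (p := q.comp ((X:ℚ[X]) ^ d)) (q := (X:ℚ[X]) ^ d)
      have hA3 := Polynomial.natDegree_comp_le (p := q) (q := (X:ℚ[X]) ^ d)
      rw [Polynomial.natDegree_X_pow] at hA1 hA2 hA3
      have hnat : (((sumPow d).comp (X ^ d)) * ((q.comp (X ^ d)).comp ((X:ℚ[X]) ^ d))).natDegree ≤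
          (d - 1) * d + q.natDegree * d * d := by
        refine Polynomial.natDegree_mul_le.trans ?_
        have t1 : ((sumPow d).comp ((X:ℚ[X]) ^ d)).natDegree ≤ (d - 1) * d :=
          hA1.trans (Nat.mul_le_mul_right d hsum)
        have t2 : ((q.comp (X ^ d)).comp ((X:ℚ[X]) ^ d)).natDegree ≤ q.natDegree * d * d :=
          hA2.trans (Nat.mul_le_mul_right d hA3)
        omega
      calc ((((sumPow d).comp (X ^ d)) * ((q.comp (X ^ d)).comp ((X:ℚ[X]) ^ d))).natDegree : ℤ)
          ≤ (((d - 1) * d + q.natDegree * d * d : ℕ) : ℤ) := by exact_mod_cast hnat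
        _ = ((d:ℤ) - 1) * (d:ℤ) + (q.natDegree : ℤ) * ((d:ℤ) * (d:ℤ)) := by
            push_cast [Nat.cast_sub (by omega : 1 ≤ d)]
            ring
    have hmul : (d:ℤ) * ((d:ℤ) * ldeg v) ≤
        (d:ℤ) * ((d:ℤ) * (-2 * (q.natDegree : ℤ) - 2)) := by
      apply mul_le_mul_of_nonneg_left _ (by linarith)
      exact mul_le_mul_of_nonneg_left he (by linarith)
    rw [show DD - (d:ℤ) - (DD - (d:ℤ)) = 0 by ring]
    generalize hgen : (((sumPow d).comp (X ^ d) * ((q.comp (X ^ d)).comp (X ^ d))).natDegree : ℤ)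
      = t at hdeg ⊢
    have hexp1 : (d:ℤ) * ((d:ℤ) * (-2 * (q.natDegree : ℤ) - 2)) =
        -2 * ((q.natDegree : ℤ) * ((d:ℤ) * (d:ℤ))) - 2 * ((d:ℤ) * (d:ℤ)) := by ring
    have hexp2 : ((d:ℤ) - 1) * (d:ℤ) = (d:ℤ) * (d:ℤ) - (d:ℤ) := by ring
    linarith [hmul, hdeg, hexp1, hexp2, hdZ]

lemma good_seq (hd2 : 2 ≤ d) (h : Good d (-4)) : ∀ n : ℕ, Good d (-4 - 2 * n) := by
  intro n
  induction n with
  | zero => simpa using h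
  | succ k ih =>
      have hstep := good_step hd2 ih (by push_cast; omega)
      refine good_mono hstep ?_
      push_cast
      omega

lemma wellApprox_of_good (hd2 : 2 ≤ d) (h : Good d (-4)) : wellApprox (fd d) := by
  intro C
  obtain ⟨p, q, hQ, hne, hb⟩ := good_seq hd2 h C.toNat
  refine ⟨p, q, ?_, ?_⟩
  · intro h0
    exact hQ (by rw [h0]; exact map_zero _)
  · have h2 : (-4 : ℤ) - 2 * (C.toNat : ℤ) < -C := by omega
    linarith

end TMAux
end Part6

end Aux

/-- Lemma 5: if `f_d` is badly approximable then all partial quotients of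
`h_d` and of `u_d` are linear. -/
theorem partial_quotients_linear (d : ℕ) (hd2 : 2 ≤ d) (hbad : ¬ wellApprox (fd d)) :
    (¬ ∃ p q : ℚ[X], IsCoprime p q ∧ q ≠ 0 ∧
        ldeg (hd d - polyToLS p / polyToLS q) ≤ -2 * (q.natDegree : ℤ) - 2) ∧
    (¬ ∃ p q : ℚ[X], IsCoprime p q ∧ q ≠ 0 ∧
        ldeg (ud d - polyToLS p / polyToLS q) ≤ -2 * (q.natDegree : ℤ) - 2) := by
  constructor
  · rintro ⟨p, q, -, hq, he⟩
    exact hbad (TMAux.wellApprox_of_good hd2 (TMAux.good_start_h hd2 p q hq he))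
  · rintro ⟨p, q, -, hq, he⟩
    exact hbad (TMAux.wellApprox_of_good hd2 (TMAux.good_start_u hd2 p q hq he))
end
end

section
/- Assume the Laurent series g_3 is badly approximable. If p, q ∈ ℚ[x] are coprime, q ≠ 0, and ‖g_3 − p/q‖ = −2‖q‖ − 2 (i.e., p/q is a convergent of g_3 with rate of approximation 2), then the polynomials x³(x−1)·p(x³) and q(x³) are coprime and ‖g_3 − x³(x−1)p(x³)/q(x³)‖ = −6‖q‖ − 2; in particular, x³(x−1)p(x³)/q(x³) is again a convergent of g_3 with rate of approximation 2. -/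
open Polynomial

noncomputable section

namespace CG3

def emb3 : ℤ ↪o ℤ :=
  ⟨⟨fun n : ℤ => 3 * n, fun a b h => by simp only at h; omega⟩, by intro a b; show 3 * a ≤ 3 * b ↔ a ≤ b; omega⟩

def SAr : LaurentSeries ℚ →+* LaurentSeries ℚ :=
  HahnSeries.embDomainRingHom (AddMonoidHom.mk' (fun n : ℤ => 3 * n) (fun a b => by ring))
    (fun a b h => by simp only [AddMonoidHom.mk'_apply] at h; omega)
    (fun g g' => by simp only [AddMonoidHom.mk'_apply]; omega)

lemma SAr_apply (u : LaurentSeries ℚ) : SAr u = HahnSeries.embDomain emb3 u := rfl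

lemma algebraMap_eq_single (c : ℚ) :
    algebraMap ℚ (LaurentSeries ℚ) c = HahnSeries.single (0 : ℤ) c := by
  have : algebraMap ℚ (LaurentSeries ℚ) c
      = HahnSeries.ofPowerSeries ℤ ℚ (algebraMap ℚ (PowerSeries ℚ) c) := rfl
  rw [this, PowerSeries.algebraMap_apply, HahnSeries.ofPowerSeries_C, HahnSeries.C_apply, Algebra.algebraMap_self_apply]

/-- Substitution `y ↦ y^3` as an algebra hom. -/
def SA : LaurentSeries ℚ →ₐ[ℚ] LaurentSeries ℚ :=
  { SAr with
    commutes' := fun c => by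
      show SAr (algebraMap ℚ (LaurentSeries ℚ) c) = algebraMap ℚ (LaurentSeries ℚ) c
      rw [algebraMap_eq_single, SAr_apply, HahnSeries.embDomain_single]
      congr 1 }

lemma SA_apply (u : LaurentSeries ℚ) : SA u = HahnSeries.embDomain emb3 u := rfl

lemma SA_coeff_mul (u : LaurentSeries ℚ) (n : ℤ) : (SA u).coeff (3 * n) = u.coeff n := by
  rw [SA_apply]
  exact HahnSeries.embDomain_coeff (f := emb3) (a := n)

lemma SA_coeff_notdvd {k : ℤ} (hk : ¬ (3:ℤ) ∣ k) (u : LaurentSeries ℚ) :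
    (SA u).coeff k = 0 := by
  rw [SA_apply]
  exact HahnSeries.embDomain_notin_range (fun ⟨m, hm⟩ => hk ⟨m, hm.symm⟩)

lemma SA_single (a : ℤ) (c : ℚ) :
    SA (HahnSeries.single a c) = HahnSeries.single (3 * a) c := by
  rw [SA_apply]
  exact HahnSeries.embDomain_single


lemma tm3 (m : ℕ) : tmCoeff 3 (3 * m) = tmCoeff 3 m := by
  rcases Nat.eq_zero_or_pos m with rfl | hm
  · simp
  have h := Nat.digits_def' (by norm_num : 1 < 3) (by positivity : 0 < 3 * m)
  rw [tmCoeff, tmCoeff, h, Nat.mul_mod_right, Nat.mul_div_cancel_left _ (by norm_num)]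
  simp

lemma tm31 (m : ℕ) : tmCoeff 3 (3 * m + 1) = -tmCoeff 3 m := by
  have h := Nat.digits_def' (by norm_num : 1 < 3) (Nat.succ_pos (3 * m))
  have h1 : (3 * m + 1) % 3 = 1 := by omega
  have h2 : (3 * m + 1) / 3 = m := by omega
  rw [tmCoeff, tmCoeff, h, h1, h2]
  by_cases hc : (Nat.digits 3 m).all (· ≤ 1) <;> simp [hc, pow_succ, pow_add]

lemma tm32 (m : ℕ) : tmCoeff 3 (3 * m + 2) = 0 := by
  have h := Nat.digits_def' (by norm_num : 1 < 3) (Nat.succ_pos (3 * m + 1))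
  have h1 : (3 * m + 2) % 3 = 2 := by omega
  rw [tmCoeff, h, h1]
  simp

lemma fd_coeff_nat (n : ℕ) : (fd 3).coeff (n : ℤ) = tmCoeff 3 n := by
  rw [fd]
  rw [HahnSeries.ofPowerSeries_apply_coeff (PowerSeries.mk fun n => tmCoeff 3 n) n]
  simp

lemma fd_coeff_neg {k : ℤ} (hk : k < 0) : (fd 3).coeff k = 0 := by
  rw [fd, HahnSeries.ofPowerSeries_apply]
  exact HahnSeries.embDomain_notin_range (by rintro ⟨m, hm⟩; simp at hm; omega)

lemma fd_eq : fd 3 = (1 - HahnSeries.single (1 : ℤ) 1) * SA (fd 3) := by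
  have key : ∀ k : ℤ, (fd 3).coeff k = (SA (fd 3)).coeff k - (SA (fd 3)).coeff (k - 1) := by
    intro k
    have vcoeff : ∀ j : ℤ, j < 0 ∨ ¬ (3:ℤ) ∣ j → (SA (fd 3)).coeff j = 0 := by
      rintro j (hj | hj)
      · by_cases hd : (3:ℤ) ∣ j
        · obtain ⟨m, rfl⟩ := hd
          rw [SA_coeff_mul]
          exact fd_coeff_neg (by omega)
        · exact SA_coeff_notdvd hd _
      · exact SA_coeff_notdvd hj _
    rcases lt_or_ge k 0 with hk | hk
    · rw [fd_coeff_neg hk, vcoeff k (Or.inl hk), vcoeff (k-1) (Or.inl (by omega))]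
      ring
    · obtain ⟨n, rfl⟩ := Int.eq_ofNat_of_zero_le hk
      obtain ⟨q, r, hr, hn⟩ : ∃ q r, r < 3 ∧ n = 3 * q + r :=
        ⟨n / 3, n % 3, Nat.mod_lt _ (by norm_num), (Nat.div_add_mod n 3).symm⟩
      subst hn
      interval_cases r
      · have e1 : ((3 * q + 0 : ℕ) : ℤ) = 3 * (q : ℤ) := by push_cast; ring
        rw [e1, SA_coeff_mul, vcoeff (3 * (q:ℤ) - 1) (Or.inr (by omega)),
          fd_coeff_nat]
        have := fd_coeff_nat (3 * q)
        rw [show ((3*q:ℕ):ℤ) = 3 * (q:ℤ) by norm_num] at this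
        rw [show (3 * (q:ℤ)) = ((3*q:ℕ):ℤ) by norm_num, fd_coeff_nat, tm3]
        ring
      · have e1 : ((3 * q + 1 : ℕ) : ℤ) - 1 = 3 * (q : ℤ) := by push_cast; ring
        rw [e1, SA_coeff_mul, vcoeff ((3 * q + 1 : ℕ) : ℤ) (Or.inr (by push_cast; omega)),
          fd_coeff_nat, fd_coeff_nat, tm31]
        ring
      · rw [vcoeff ((3 * q + 2 : ℕ) : ℤ) (Or.inr (by push_cast; omega)),
          vcoeff (((3 * q + 2 : ℕ) : ℤ) - 1) (Or.inr (by push_cast; omega)),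
          fd_coeff_nat, tm32]
        ring
  ext k
  have hs : (HahnSeries.single (1:ℤ) (1:ℚ) * SA (fd 3)).coeff k = (SA (fd 3)).coeff (k - 1) := by
    have := HahnSeries.coeff_single_mul_add (r := (1:ℚ)) (x := SA (fd 3)) (a := k - 1) (b := 1)
    rw [sub_add_cancel] at this
    rw [this, one_mul]
  rw [sub_mul, one_mul, HahnSeries.coeff_sub, hs, key k]


lemma xL_pow (k : ℕ) : xL ^ k = HahnSeries.single (-(k : ℤ)) 1 := by
  induction k with
  | zero => simp [← HahnSeries.single_zero_one]
  | succ n ih =>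
      rw [pow_succ, ih, xL, HahnSeries.single_mul_single, mul_one]
      congr 1
      push_cast
      ring

lemma polyA : polyToLS (X ^ 3 * (X - 1)) =
    HahnSeries.single (-4 : ℤ) 1 - HahnSeries.single (-3 : ℤ) 1 := by
  rw [polyToLS, map_mul, map_sub, map_pow, Polynomial.aeval_X, Polynomial.aeval_one]
  rw [xL_pow 3, mul_sub, mul_one, xL, HahnSeries.single_mul_single, mul_one]
  rw [show (-((3:ℕ):ℤ) + -1) = -4 by norm_num, show -((3:ℕ):ℤ) = -3 by norm_num]

lemma fd_gd : fd 3 = HahnSeries.single (-2 : ℤ) 1 * gd 3 := by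
  rw [gd, ← mul_assoc, HahnSeries.single_mul_single, one_mul]
  rw [show (-2 + (((3:ℕ):ℤ) - 1)) = 0 by norm_num, HahnSeries.single_zero_one, one_mul]

lemma gd_eq : gd 3 = polyToLS (X ^ 3 * (X - 1)) * SA (gd 3) := by
  rw [polyA]
  have h1 : gd 3 = HahnSeries.single (2:ℤ) 1 * fd 3 := by
    rw [gd, show (((3:ℕ):ℤ) - 1) = 2 by norm_num]
  conv_lhs => rw [h1, fd_eq, fd_gd, map_mul, SA_single]
  have s1 : HahnSeries.single (2:ℤ) (1:ℚ) * HahnSeries.single (3 * (-2):ℤ) 1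
      = HahnSeries.single (-4:ℤ) 1 := by
    rw [HahnSeries.single_mul_single, mul_one]; norm_num
  have s2 : HahnSeries.single (1:ℤ) (1:ℚ) * HahnSeries.single (3 * (-2):ℤ) 1
      = HahnSeries.single (-5:ℤ) 1 := by
    rw [HahnSeries.single_mul_single, mul_one]; norm_num
  have s3 : HahnSeries.single (2:ℤ) (1:ℚ) * HahnSeries.single (-5:ℤ) 1
      = HahnSeries.single (-3:ℤ) 1 := by
    rw [HahnSeries.single_mul_single, mul_one]; norm_num
  calc HahnSeries.single (2:ℤ) (1:ℚ) * ((1 - HahnSeries.single (1:ℤ) 1) *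
        (HahnSeries.single (3 * (-2):ℤ) 1 * SA (gd 3)))
      = (HahnSeries.single (2:ℤ) (1:ℚ) * HahnSeries.single (3 * (-2):ℤ) 1) * SA (gd 3)
        - (HahnSeries.single (2:ℤ) (1:ℚ) * (HahnSeries.single (1:ℤ) (1:ℚ) *
          HahnSeries.single (3 * (-2):ℤ) 1)) * SA (gd 3) := by ring
    _ = (HahnSeries.single (-4:ℤ) 1 - HahnSeries.single (-3:ℤ) 1) * SA (gd 3) := by
        rw [s1, s2, s3, sub_mul]


lemma SA_ne_zero {u : LaurentSeries ℚ} (hu : u ≠ 0) : SA u ≠ 0 := by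
  intro h
  apply hu
  have hinj : Function.Injective (SA : LaurentSeries ℚ → LaurentSeries ℚ) :=
    RingHom.injective SA.toRingHom
  apply hinj
  simpa using h

lemma order_SA {u : LaurentSeries ℚ} (hu : u ≠ 0) : (SA u).order = 3 * u.order := by
  apply le_antisymm
  · apply HahnSeries.order_le_of_coeff_ne_zero
    rw [SA_coeff_mul]
    exact mt HahnSeries.coeff_order_eq_zero.mp hu
  · have h := mt HahnSeries.coeff_order_eq_zero.mp (SA_ne_zero hu)
    by_cases hd : (3:ℤ) ∣ (SA u).order
    · obtain ⟨m, hm⟩ := hd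
      rw [hm, SA_coeff_mul] at h
      have h2 := HahnSeries.order_le_of_coeff_ne_zero h
      omega
    · exact absurd (SA_coeff_notdvd hd u) h

lemma ldeg_mul {u v : LaurentSeries ℚ} (hu : u ≠ 0) (hv : v ≠ 0) :
    ldeg (u * v) = ldeg u + ldeg v := by
  unfold ldeg
  rw [HahnSeries.order_mul hu hv]
  ring

lemma ldeg_SA {u : LaurentSeries ℚ} (hu : u ≠ 0) : ldeg (SA u) = 3 * ldeg u := by
  unfold ldeg
  rw [order_SA hu]
  ring

lemma sum_coeff {ι : Type*} (s : Finset ι) (f : ι → LaurentSeries ℚ) (a : ℤ) :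
    (∑ i ∈ s, f i).coeff a = ∑ i ∈ s, (f i).coeff a :=
  map_sum (⟨⟨fun u : LaurentSeries ℚ => u.coeff a, rfl⟩,
    fun x y => HahnSeries.coeff_add⟩ : LaurentSeries ℚ →+ ℚ) f s

lemma polyToLS_eq_sum (r : ℚ[X]) :
    polyToLS r = ∑ i ∈ Finset.range (r.natDegree + 1),
      HahnSeries.single (-(i : ℤ)) (r.coeff i) := by
  rw [polyToLS, Polynomial.aeval_eq_sum_range]
  refine Finset.sum_congr rfl fun i _ => ?_
  rw [xL_pow, Algebra.smul_def, algebraMap_eq_single, HahnSeries.single_mul_single,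
    zero_add, mul_one]

lemma polyToLS_coeff (r : ℚ[X]) (k : ℕ) : (polyToLS r).coeff (-(k : ℤ)) = r.coeff k := by
  rw [polyToLS_eq_sum, sum_coeff]
  have : ∀ i ∈ Finset.range (r.natDegree + 1),
      (HahnSeries.single (-(i:ℤ)) (r.coeff i)).coeff (-(k:ℤ))
        = if k = i then r.coeff i else 0 := by
    intro i _
    rw [HahnSeries.coeff_single]
    congr 1
    simp
  rw [Finset.sum_congr rfl this, Finset.sum_ite_eq]
  by_cases hk : k ∈ Finset.range (r.natDegree + 1)
  · rw [if_pos hk]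
  · rw [if_neg hk]
    simp only [Finset.mem_range, not_lt] at hk
    exact (Polynomial.coeff_eq_zero_of_natDegree_lt (by omega)).symm

lemma polyToLS_coeff_zero_of_lt (r : ℚ[X]) {m : ℤ} (hm : m < -(r.natDegree : ℤ)) :
    (polyToLS r).coeff m = 0 := by
  rw [polyToLS_eq_sum, sum_coeff]
  apply Finset.sum_eq_zero
  intro i hi
  rw [HahnSeries.coeff_single, if_neg]
  simp only [Finset.mem_range] at hi
  omega

lemma polyToLS_ne_zero {r : ℚ[X]} (hr : r ≠ 0) : polyToLS r ≠ 0 := by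
  intro h
  have h2 := polyToLS_coeff r r.natDegree
  rw [h, HahnSeries.coeff_zero] at h2
  exact hr (Polynomial.leadingCoeff_eq_zero.mp h2.symm)

lemma order_polyToLS {r : ℚ[X]} (hr : r ≠ 0) :
    (polyToLS r).order = -(r.natDegree : ℤ) := by
  apply le_antisymm
  · apply HahnSeries.order_le_of_coeff_ne_zero
    rw [polyToLS_coeff]
    exact mt Polynomial.leadingCoeff_eq_zero.mp hr
  · by_contra hlt
    push_neg at hlt
    exact mt HahnSeries.coeff_order_eq_zero.mp (polyToLS_ne_zero hr)
      (polyToLS_coeff_zero_of_lt r hlt)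

lemma ldeg_polyToLS {r : ℚ[X]} (hr : r ≠ 0) : ldeg (polyToLS r) = r.natDegree := by
  unfold ldeg
  rw [order_polyToLS hr]
  ring

lemma polyToLS_mul (a b : ℚ[X]) : polyToLS (a * b) = polyToLS a * polyToLS b := by
  unfold polyToLS
  exact map_mul _ _ _

lemma polyToLS_comp (r : ℚ[X]) : polyToLS (r.comp (X ^ 3)) = SA (polyToLS r) := by
  unfold polyToLS
  rw [Polynomial.aeval_comp]
  have h1 : Polynomial.aeval xL ((X : ℚ[X]) ^ 3) = SA xL := by
    rw [map_pow, Polynomial.aeval_X, xL_pow, xL, SA_single]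
    norm_num
  rw [h1, Polynomial.aeval_algHom_apply]


lemma gd_funeq : gd 3 = polyToLS (X ^ 3 * (X - 1)) * SA (gd 3) := gd_eq

lemma hA_ne : (X ^ 3 * (X - 1) : ℚ[X]) ≠ 0 := by
  intro h
  have := congrArg (Polynomial.eval 2) h
  norm_num at this

lemma hA_deg : (X ^ 3 * (X - 1) : ℚ[X]).natDegree = 4 := by
  compute_degree!

lemma stepEq (p q : ℚ[X]) :
    gd 3 - polyToLS (X ^ 3 * (X - 1) * p.comp (X ^ 3)) / polyToLS (q.comp (X ^ 3))
      = polyToLS (X ^ 3 * (X - 1)) * SA (gd 3 - polyToLS p / polyToLS q) := by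
  rw [map_sub, map_div₀, ← polyToLS_comp, ← polyToLS_comp, polyToLS_mul]
  conv_lhs => rw [gd_funeq]
  ring

lemma step (p q : ℚ[X]) (hne : gd 3 - polyToLS p / polyToLS q ≠ 0) :
    (gd 3 - polyToLS (X ^ 3 * (X - 1) * p.comp (X ^ 3)) / polyToLS (q.comp (X ^ 3)) ≠ 0) ∧
    ldeg (gd 3 - polyToLS (X ^ 3 * (X - 1) * p.comp (X ^ 3)) / polyToLS (q.comp (X ^ 3)))
      = 3 * ldeg (gd 3 - polyToLS p / polyToLS q) + 4 := by
  rw [stepEq]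
  refine ⟨mul_ne_zero (polyToLS_ne_zero hA_ne) (SA_ne_zero hne), ?_⟩
  rw [ldeg_mul (polyToLS_ne_zero hA_ne) (SA_ne_zero hne), ldeg_polyToLS hA_ne,
    ldeg_SA hne, hA_deg]
  ring

lemma comp_pow_ne_zero {r : ℚ[X]} (hr : r ≠ 0) {e : ℕ} (he : e ≠ 0) :
    r.comp (X ^ e) ≠ 0 := by
  intro h
  have hd : ((X : ℚ[X]) ^ e).natDegree ≠ 0 := by
    rw [Polynomial.natDegree_X_pow]; exact he
  have := Polynomial.leadingCoeff_comp (p := r) (q := X ^ e) hd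
  rw [h, Polynomial.leadingCoeff_zero] at this
  simp [Polynomial.leadingCoeff_X_pow] at this
  exact hr (Polynomial.leadingCoeff_eq_zero.mp this.symm)

lemma comp_pow_natDegree (r : ℚ[X]) (e : ℕ) :
    (r.comp (X ^ e)).natDegree = r.natDegree * e := by
  rw [Polynomial.natDegree_comp, Polynomial.natDegree_X_pow]

lemma dvd_comp {a b : ℚ[X]} (h : a ∣ b) (c : ℚ[X]) : a.comp c ∣ b.comp c := by
  obtain ⟨e, rfl⟩ := h
  exact ⟨e.comp c, by rw [Polynomial.mul_comp]⟩

/-- The iterated numerators and denominators. -/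
def pIt (p : ℚ[X]) : ℕ → ℚ[X]
  | 0 => p
  | k + 1 => X ^ 3 * (X - 1) * (pIt p k).comp (X ^ 3)

def qIt (q : ℚ[X]) : ℕ → ℚ[X]
  | 0 => q
  | k + 1 => (qIt q k).comp (X ^ 3)

lemma qIt_ne_zero {q : ℚ[X]} (hq : q ≠ 0) (k : ℕ) : qIt q k ≠ 0 := by
  induction k with
  | zero => exact hq
  | succ n ih => exact comp_pow_ne_zero ih (by norm_num)

lemma qIt_natDegree (q : ℚ[X]) (k : ℕ) : (qIt q k).natDegree = 3 ^ k * q.natDegree := by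
  induction k with
  | zero => simp [qIt]
  | succ n ih =>
      show ((qIt q n).comp (X ^ 3)).natDegree = _
      rw [comp_pow_natDegree, ih, pow_succ]
      ring

lemma It_dvd {D p q : ℚ[X]} (hp : D ∣ p) (hq : D ∣ q) (k : ℕ) :
    D.comp (X ^ 3 ^ k) ∣ pIt p k ∧ D.comp (X ^ 3 ^ k) ∣ qIt q k := by
  induction k with
  | zero => simpa [pIt, qIt] using ⟨hp, hq⟩
  | succ n ih =>
      have hcomp : (D.comp (X ^ 3 ^ n)).comp (X ^ 3) = D.comp (X ^ 3 ^ (n + 1)) := by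
        rw [Polynomial.comp_assoc, Polynomial.X_pow_comp, ← pow_mul, pow_succ, mul_comm]
      constructor
      · show _ ∣ X ^ 3 * (X - 1) * (pIt p n).comp (X ^ 3)
        exact Dvd.dvd.mul_left (by rw [← hcomp]; exact dvd_comp ih.1 _) _
      · show _ ∣ (qIt q n).comp (X ^ 3)
        rw [← hcomp]
        exact dvd_comp ih.2 _

lemma It_ldeg {p q : ℚ[X]} (hne : gd 3 - polyToLS p / polyToLS q ≠ 0) (k : ℕ) :
    (gd 3 - polyToLS (pIt p k) / polyToLS (qIt q k) ≠ 0) ∧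
    ldeg (gd 3 - polyToLS (pIt p k) / polyToLS (qIt q k))
      = 3 ^ k * ldeg (gd 3 - polyToLS p / polyToLS q) + 2 * (3 ^ k - 1) := by
  induction k with
  | zero => exact ⟨hne, by simp [pIt, qIt]⟩
  | succ n ih =>
      have hs := step (pIt p n) (qIt q n) ih.1
      refine ⟨hs.1, ?_⟩
      show ldeg (gd 3 - polyToLS (X ^ 3 * (X - 1) * (pIt p n).comp (X ^ 3))
        / polyToLS ((qIt q n).comp (X ^ 3))) = _
      rw [hs.2, ih.2, pow_succ]
      ring

end CG3

/-- Lemma 5 for `d = 3`: a convergent of `g_3` with rate of approximation 2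
produces another convergent of `g_3` with rate of approximation 2. -/
theorem convergent_g3_step (hbad : ¬ wellApprox (gd 3)) (p q : ℚ[X])
    (hpq : IsCoprime p q) (hq : q ≠ 0)
    (h : ldeg (gd 3 - polyToLS p / polyToLS q) = -2 * (q.natDegree : ℤ) - 2) :
    IsCoprime (X ^ 3 * (X - 1) * p.comp (X ^ 3)) (q.comp (X ^ 3)) ∧
    ldeg (gd 3 - polyToLS (X ^ 3 * (X - 1) * p.comp (X ^ 3)) / polyToLS (q.comp (X ^ 3)))
      = -6 * (q.natDegree : ℤ) - 2 := by
  classical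
  have hne : gd 3 - polyToLS p / polyToLS q ≠ 0 := by
    intro h0
    rw [h0] at h
    unfold ldeg at h
    rw [HahnSeries.order_zero] at h
    have : (0:ℤ) ≤ (q.natDegree : ℤ) := Int.natCast_nonneg _
    omega
  have hstep := CG3.step p q hne
  refine ⟨?_, by rw [hstep.2, h]; ring⟩
  by_contra hnc
  set p₁ := X ^ 3 * (X - 1) * p.comp (X ^ 3) with hp₁
  set q₁ := q.comp (X ^ 3) with hq₁def
  have hq₁ : q₁ ≠ 0 := CG3.comp_pow_ne_zero hq (by norm_num)
  set D := EuclideanDomain.gcd p₁ q₁ with hD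
  have hDp : D ∣ p₁ := EuclideanDomain.gcd_dvd_left _ _
  have hDq : D ∣ q₁ := EuclideanDomain.gcd_dvd_right _ _
  have hD0 : D ≠ 0 := by
    intro h0
    exact hq₁ (EuclideanDomain.gcd_eq_zero_iff.mp h0).2
  have hDdeg : 1 ≤ D.natDegree := by
    by_contra hd
    push_neg at hd
    have h0 : D.natDegree = 0 := by omega
    have hu : IsUnit D := by
      rw [Polynomial.eq_C_of_natDegree_eq_zero h0]
      refine Polynomial.isUnit_C.mpr (isUnit_iff_ne_zero.mpr ?_)
      intro hc
      apply hD0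
      rw [Polynomial.eq_C_of_natDegree_eq_zero h0, hc, map_zero]
    exact hnc (EuclideanDomain.gcd_isUnit_iff.mp hu)
  apply hbad
  intro C
  set k := C.toNat with hk
  have hpow : C < (3:ℤ) ^ k := by
    have h1 : C ≤ (k : ℤ) := Int.self_le_toNat C
    have h2 : k < 3 ^ k := Nat.lt_pow_self (by norm_num)
    have h3 : (k:ℤ) < (3:ℤ)^k := by exact_mod_cast h2
    omega
  obtain ⟨hdvdP, hdvdQ⟩ := CG3.It_dvd hDp hDq k
  obtain ⟨P, hP⟩ := hdvdP
  obtain ⟨Q, hQ⟩ := hdvdQ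
  have hDk : D.comp (X ^ 3 ^ k) ≠ 0 := CG3.comp_pow_ne_zero hD0 (by positivity)
  have hqk : CG3.qIt q₁ k ≠ 0 := CG3.qIt_ne_zero hq₁ k
  have hQ0 : Q ≠ 0 := by
    intro h0; rw [h0, mul_zero] at hQ; exact hqk hQ
  refine ⟨P, Q, hQ0, ?_⟩
  have heq : polyToLS (CG3.pIt p₁ k) / polyToLS (CG3.qIt q₁ k) = polyToLS P / polyToLS Q := by
    rw [hP, hQ, CG3.polyToLS_mul, CG3.polyToLS_mul,
      mul_div_mul_left _ _ (CG3.polyToLS_ne_zero hDk)]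
  have hld := (CG3.It_ldeg hstep.1 k).2
  have hstart : ldeg (gd 3 - polyToLS p₁ / polyToLS q₁) = -6 * (q.natDegree : ℤ) - 2 := by
    rw [hstep.2, h]; ring
  rw [show CG3.pIt p₁ k = CG3.pIt p₁ k from rfl, hstart] at hld
  -- degree bookkeeping
  have hdegE : (CG3.qIt q₁ k).natDegree = (D.comp (X ^ 3 ^ k)).natDegree + Q.natDegree :=
    by rw [hQ, Polynomial.natDegree_mul hDk hQ0]
  have hdeg1 : (CG3.qIt q₁ k).natDegree = 3 ^ k * (q.natDegree * 3) := by
    rw [CG3.qIt_natDegree, hq₁def, CG3.comp_pow_natDegree]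
  have hdeg2 : (D.comp (X ^ 3 ^ k)).natDegree = D.natDegree * 3 ^ k :=
    CG3.comp_pow_natDegree D (3 ^ k)
  rw [← heq, hld]
  have hE : ((3:ℤ) ^ k) * ((q.natDegree:ℤ) * 3)
      = (D.natDegree : ℤ) * 3 ^ k + (Q.natDegree : ℤ) := by
    have := hdeg1 ▸ hdegE
    rw [hdeg2] at this
    exact_mod_cast this
  have hm : (1:ℤ) ≤ (D.natDegree : ℤ) := by exact_mod_cast hDdeg
  have ha : (1:ℤ) ≤ (3:ℤ) ^ k := one_le_pow₀ (by norm_num)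
  have hma : (3:ℤ) ^ k ≤ (D.natDegree : ℤ) * 3 ^ k := le_mul_of_one_le_left (by linarith) hm
  nlinarith [hE, hpow, hma]
end
end

section
/- Let d and a be integers with d ≥ 4 and a ≥ 2, and let f_d(a) denote the real number ∏_{t=0}^∞ (1 − a^{−d^t}). Then the irrationality exponent of f_d(a) is at least d − 1: for every real τ < d − 1 there exist infinitely many pairs of integers (P, Q) with Q ≥ 1 and 0 < |f_d(a) − P/Q| < Q^{−τ}. In particular, f_d(a) is not badly approximable. -/
open Polynomial

noncomputable section

namespace FdIrrAux

variable (a d : ℕ)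

/-- `a^{-d^t}`. -/
def eps (t : ℕ) : ℝ := (a : ℝ) ^ (-(d ^ t : ℤ))

/-- The partial product `∏_{t<N} (1 - a^{-d^t})`. -/
def PP (N : ℕ) : ℝ := ∏ t ∈ Finset.range N, (1 - eps a d t)

/-- `1 + d + ⋯ + d^{N-1}`. -/
def sN (N : ℕ) : ℕ := ∑ t ∈ Finset.range N, d ^ t

/-- Numerator of the `N`-th convergent. -/
def Pnum (N : ℕ) : ℤ := ∏ t ∈ Finset.range N, ((a : ℤ) ^ (d ^ t) - 1)

/-- Denominator of the `N`-th convergent. -/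
def Qden (N : ℕ) : ℤ := (a : ℤ) ^ (sN d N)

variable {a d}

lemma eps_pos (ha : 2 ≤ a) (t : ℕ) : 0 < eps a d t := by
  apply zpow_pos; exact_mod_cast Nat.lt_of_lt_of_le two_pos ha

lemma eps_eq (t : ℕ) : eps a d t = ((a : ℝ) ^ (d ^ t : ℕ))⁻¹ := by
  rw [eps, zpow_neg]
  norm_cast

lemma pow_anti (ha : 2 ≤ a) (m : ℕ) : ((a : ℝ) ^ m)⁻¹ ≤ ((2 : ℝ) ^ m)⁻¹ := by
  apply inv_anti₀ (by positivity)
  apply pow_le_pow_left₀ (by norm_num)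
  exact_mod_cast ha

lemma eps_le (ha : 2 ≤ a) {t m : ℕ} (hm : m ≤ d ^ t) : eps a d t ≤ (2 : ℝ)⁻¹ ^ m := by
  rw [eps_eq, inv_pow]
  calc ((a:ℝ) ^ (d ^ t : ℕ))⁻¹ ≤ ((2:ℝ) ^ (d ^ t : ℕ))⁻¹ := pow_anti ha _
    _ ≤ ((2:ℝ) ^ m)⁻¹ := by
        apply inv_anti₀ (by positivity)
        exact pow_le_pow_right₀ one_le_two hm

lemma eps_le_half (ha : 2 ≤ a) (hd : 1 ≤ d) (t : ℕ) : eps a d t ≤ 2⁻¹ := by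
  simpa using eps_le ha (Nat.one_le_pow _ _ hd)

lemma eps_decay (ha : 2 ≤ a) (hd : 2 ≤ d) (N i : ℕ) :
    eps a d (N + i) ≤ eps a d N * (2 : ℝ)⁻¹ ^ i := by
  have hdm : d ^ N + i ≤ d ^ (N + i) := by
    have hi : i + 1 ≤ d ^ i := Nat.succ_le_of_lt (Nat.lt_pow_self (n := i) hd)
    have h1 : 1 ≤ d ^ N := Nat.one_le_pow _ _ (by omega)
    calc d ^ N + i ≤ d ^ N + i * d ^ N := by nlinarith
      _ = d ^ N * (i + 1) := by ring
      _ ≤ d ^ N * d ^ i := Nat.mul_le_mul_left _ hi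
      _ = d ^ (N + i) := (pow_add d N i).symm
  have ha0 : (a : ℝ) ≠ 0 := by positivity
  have key : eps a d (N + i)
      = eps a d N * (a : ℝ) ^ (-(((d ^ (N + i) : ℕ) : ℤ) - ((d ^ N : ℕ) : ℤ))) := by
    rw [eps, eps, ← zpow_add₀ ha0]
    congr 1
    push_cast
    ring
  rw [key]
  apply mul_le_mul_of_nonneg_left _ (le_of_lt (eps_pos ha N))
  have hie : (i : ℤ) ≤ ((d ^ (N + i) : ℕ) : ℤ) - ((d ^ N : ℕ) : ℤ) := by omega
  calc (a : ℝ) ^ (-(((d ^ (N+i) : ℕ) : ℤ) - ((d ^ N : ℕ) : ℤ)))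
      ≤ (a : ℝ) ^ (-(i : ℤ)) := by
        apply zpow_le_zpow_right₀ (by exact_mod_cast Nat.one_le_of_lt ha) (by omega)
    _ = ((a : ℝ) ^ i)⁻¹ := by rw [zpow_neg, zpow_natCast]
    _ ≤ ((2 : ℝ) ^ i)⁻¹ := pow_anti ha i
    _ = (2 : ℝ)⁻¹ ^ i := (inv_pow 2 i).symm

lemma sum_eps_le (ha : 2 ≤ a) (hd : 2 ≤ d) (N k : ℕ) :
    ∑ i ∈ Finset.range k, eps a d (N + i) ≤ 2 * eps a d N := by
  calc ∑ i ∈ Finset.range k, eps a d (N + i)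
      ≤ ∑ i ∈ Finset.range k, eps a d N * (2:ℝ)⁻¹ ^ i :=
        Finset.sum_le_sum fun i _ => eps_decay ha hd N i
    _ = eps a d N * ∑ i ∈ Finset.range k, (1/2 : ℝ) ^ i := by
        rw [Finset.mul_sum]; norm_num
    _ ≤ eps a d N * 2 := by
        apply mul_le_mul_of_nonneg_left (sum_geometric_two_le k) (le_of_lt (eps_pos ha N))
    _ = 2 * eps a d N := mul_comm _ _

lemma factor_pos (ha : 2 ≤ a) (hd : 1 ≤ d) (t : ℕ) : 0 < 1 - eps a d t := by
  have := eps_le_half ha hd t; norm_num at this ⊢; linarith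

lemma factor_le_one (ha : 2 ≤ a) (t : ℕ) : 1 - eps a d t ≤ 1 := by
  have := eps_pos ha (d := d) t; linarith

lemma PP_pos (ha : 2 ≤ a) (hd : 1 ≤ d) (N : ℕ) : 0 < PP a d N :=
  Finset.prod_pos fun t _ => factor_pos ha hd t

lemma PP_le_one (ha : 2 ≤ a) (hd : 1 ≤ d) (N : ℕ) : PP a d N ≤ 1 :=
  Finset.prod_le_one (fun t _ => (factor_pos ha hd t).le) (fun t _ => factor_le_one ha t)

lemma weierstrass (f : ℕ → ℝ) (h0 : ∀ i, 0 ≤ f i) (h1 : ∀ i, f i ≤ 1) (k : ℕ) :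
    1 - ∑ i ∈ Finset.range k, f i ≤ ∏ i ∈ Finset.range k, (1 - f i) := by
  induction k with
  | zero => simp
  | succ k ih =>
    rw [Finset.sum_range_succ, Finset.prod_range_succ]
    have hsum : 0 ≤ ∑ i ∈ Finset.range k, f i := Finset.sum_nonneg fun i _ => h0 i
    have := mul_le_mul_of_nonneg_right ih (by linarith [h1 k] : (0:ℝ) ≤ 1 - f k)
    nlinarith [h0 k, h1 k]

lemma multipliable (ha : 2 ≤ a) (hd : 1 ≤ d) :
    Multipliable (fun t => 1 - eps a d t) := by
  refine ⟨⨅ s : Finset ℕ, ∏ t ∈ s, (1 - eps a d t), ?_⟩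
  apply tendsto_atTop_ciInf
  · intro s t hst
    show (∏ u ∈ t, (1 - eps a d u)) ≤ ∏ u ∈ s, (1 - eps a d u)
    rw [← Finset.prod_sdiff hst]
    have h1 : (∏ u ∈ t \ s, (1 - eps a d u)) ≤ 1 :=
      Finset.prod_le_one (fun u _ => (factor_pos ha hd u).le) (fun u _ => factor_le_one ha u)
    have h2 : 0 ≤ ∏ u ∈ s, (1 - eps a d u) :=
      Finset.prod_nonneg fun u _ => (factor_pos ha hd u).le
    calc (∏ u ∈ t \ s, (1 - eps a d u)) * ∏ u ∈ s, (1 - eps a d u)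
        ≤ 1 * ∏ u ∈ s, (1 - eps a d u) := mul_le_mul_of_nonneg_right h1 h2
      _ = _ := one_mul _
  · refine ⟨0, fun x hx => ?_⟩
    obtain ⟨s, rfl⟩ := hx
    exact Finset.prod_nonneg fun u _ => (factor_pos ha hd u).le

lemma tendsto_PP (ha : 2 ≤ a) (hd : 1 ≤ d) :
    Filter.Tendsto (PP a d) Filter.atTop (nhds (∏' t, (1 - eps a d t))) :=
  (multipliable ha hd).hasProd.tendsto_prod_nat

lemma fd_bounds (ha : 2 ≤ a) (hd : 2 ≤ d) (N : ℕ) :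
    PP a d N - 2 * eps a d N ≤ (∏' t, (1 - eps a d t)) ∧
      (∏' t, (1 - eps a d t)) ≤ PP a d N * (1 - eps a d N) := by
  have hd1 : 1 ≤ d := by omega
  have hPPpos := PP_pos ha hd1 N
  have hPPle := PP_le_one ha hd1 N
  have hepsN := eps_pos ha (d := d) N
  have hkey : ∀ M, N + 1 ≤ M →
      PP a d N - 2 * eps a d N ≤ PP a d M ∧ PP a d M ≤ PP a d N * (1 - eps a d N) := by
    intro M hM
    obtain ⟨k, rfl⟩ : ∃ k, M = N + k := ⟨M - N, by omega⟩
    have hk : 1 ≤ k := by omega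
    have hsplit : PP a d (N + k) = PP a d N * ∏ i ∈ Finset.range k, (1 - eps a d (N + i)) := by
      rw [PP, PP, Finset.prod_range_add]
    constructor
    · have hW : 1 - ∑ i ∈ Finset.range k, eps a d (N + i)
          ≤ ∏ i ∈ Finset.range k, (1 - eps a d (N + i)) :=
        weierstrass _ (fun i => (eps_pos ha _).le)
          (fun i => le_trans (eps_le_half ha hd1 _) (by norm_num)) k
      have hT : 1 - 2 * eps a d N ≤ ∏ i ∈ Finset.range k, (1 - eps a d (N + i)) :=
        le_trans (by linarith [sum_eps_le ha hd N k]) hW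
      rw [hsplit]
      nlinarith
    · rw [hsplit]
      apply mul_le_mul_of_nonneg_left _ hPPpos.le
      obtain ⟨k', rfl⟩ : ∃ k', k = k' + 1 := ⟨k - 1, by omega⟩
      rw [Finset.prod_range_succ']
      simp only [Nat.add_zero]
      calc (∏ i ∈ Finset.range k', (1 - eps a d (N + (i + 1)))) * (1 - eps a d N)
          ≤ 1 * (1 - eps a d N) := by
            apply mul_le_mul_of_nonneg_right _ (factor_pos ha hd1 N).le
            exact Finset.prod_le_one (fun u _ => (factor_pos ha hd1 _).le)
              (fun u _ => factor_le_one ha _)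
        _ = 1 - eps a d N := one_mul _
  constructor
  · apply ge_of_tendsto (tendsto_PP ha hd1)
    filter_upwards [Filter.eventually_ge_atTop (N + 1)] with M hM
    exact (hkey M hM).1
  · apply le_of_tendsto (tendsto_PP ha hd1)
    filter_upwards [Filter.eventually_ge_atTop (N + 1)] with M hM
    exact (hkey M hM).2

lemma Qden_pos (ha : 2 ≤ a) (N : ℕ) : 0 < Qden a d N :=
  pow_pos (by exact_mod_cast Nat.lt_of_lt_of_le two_pos ha) _

lemma Qden_one_le (ha : 2 ≤ a) (N : ℕ) : 1 ≤ Qden a d N := Qden_pos ha N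

lemma Qden_strictMono (ha : 2 ≤ a) (hd : 1 ≤ d) : StrictMono (Qden a d) := by
  intro m n hmn
  apply pow_lt_pow_right₀ (by exact_mod_cast ha : (1:ℤ) < (a:ℤ))
  apply Finset.sum_lt_sum_of_subset (Finset.range_subset_range.2 hmn.le) (i := m)
    (by simp [hmn]) (by simp) (Nat.one_le_pow _ _ (by omega))
  intro k _ _; positivity

lemma Qden_cast (N : ℕ) :
    ((Qden a d N : ℤ) : ℝ) = ∏ t ∈ Finset.range N, (a : ℝ) ^ (d ^ t : ℕ) := by
  rw [Finset.prod_pow_eq_pow_sum, Qden]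
  push_cast
  rfl

lemma ratio_eq (ha : 2 ≤ a) (N : ℕ) :
    ((Pnum a d N : ℤ) : ℝ) / ((Qden a d N : ℤ) : ℝ) = PP a d N := by
  have hapos : (0:ℝ) < (a:ℝ) := by exact_mod_cast Nat.lt_of_lt_of_le two_pos ha
  rw [Qden_cast, Pnum, PP]
  push_cast
  rw [← Finset.prod_div_distrib]
  apply Finset.prod_congr rfl
  intro t _
  rw [eps_eq]
  have : ((a:ℝ) ^ (d ^ t : ℕ)) ≠ 0 := by positivity
  field_simp

lemma geom_id (N : ℕ) : ((d : ℤ) - 1) * (sN d N : ℤ) + 1 = (d : ℤ) ^ N := by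
  have := geom_sum_mul (d : ℤ) N
  have hs : (sN d N : ℤ) = ∑ i ∈ Finset.range N, (d : ℤ) ^ i := by
    rw [sN]; push_cast; rfl
  rw [hs]
  linarith [this]

lemma sN_ge (hd : 1 ≤ d) (N : ℕ) : N ≤ sN d N := by
  calc N = ∑ _t ∈ Finset.range N, 1 := by simp
    _ ≤ sN d N := Finset.sum_le_sum fun t _ => Nat.one_le_pow _ _ (by omega)

/-- The main approximation estimate. -/
lemma approx (ha : 2 ≤ a) (hd : 2 ≤ d) (N : ℕ) :
    0 < |(∏' t, (1 - eps a d t)) - ((Pnum a d N : ℤ) : ℝ) / ((Qden a d N : ℤ) : ℝ)| ∧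
      |(∏' t, (1 - eps a d t)) - ((Pnum a d N : ℤ) : ℝ) / ((Qden a d N : ℤ) : ℝ)|
        ≤ 2 * eps a d N := by
  have hd1 : 1 ≤ d := by omega
  obtain ⟨h1, h2⟩ := fd_bounds ha hd N
  have hPPpos := PP_pos ha hd1 N
  have hepsN := eps_pos ha (d := d) N
  rw [ratio_eq ha]
  have hlt : (∏' t, (1 - eps a d t)) < PP a d N := lt_of_le_of_lt h2 (by nlinarith)
  rw [abs_sub_comm, abs_of_pos (by linarith)]
  constructor <;> linarith

lemma rpow_bound (ha : 2 ≤ a) (hd4 : 4 ≤ d) {τ : ℝ} (hτ : τ < (d : ℝ) - 1) {N : ℕ}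
    (hN : 1 ≤ N) : 2 * eps a d N < ((Qden a d N : ℤ) : ℝ) ^ (-τ) := by
  have hd1 : 1 ≤ d := by omega
  have hapos : (0:ℝ) < (a:ℝ) := by positivity
  have ha2 : (2:ℝ) ≤ (a:ℝ) := by exact_mod_cast ha
  have hS1 : 1 ≤ sN d N := le_trans hN (sN_ge hd1 N)
  have hQ : ((Qden a d N : ℤ) : ℝ) = (a:ℝ) ^ (sN d N : ℕ) := by
    rw [Qden]; push_cast; rfl
  rw [hQ, ← Real.rpow_natCast (a:ℝ) (sN d N), ← Real.rpow_mul hapos.le]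
  have hepsr : eps a d N = (a:ℝ) ^ (-((d:ℝ) ^ N)) := by
    rw [eps, ← Real.rpow_intCast]
    congr 1
    push_cast
    ring
  rw [hepsr]
  have hdN : ((d:ℝ) ^ N) = ((d:ℝ) - 1) * (sN d N : ℝ) + 1 := by
    exact_mod_cast (geom_id (d := d) N).symm
  have h1e : 1 < (d:ℝ) ^ N - τ * (sN d N : ℝ) := by
    have hS : (1:ℝ) ≤ ((sN d N : ℕ) : ℝ) := by exact_mod_cast hS1
    rw [hdN]; nlinarith
  have h2e : (2:ℝ) < (a:ℝ) ^ ((d:ℝ) ^ N - τ * (sN d N : ℝ)) := by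
    calc (2:ℝ) = (2:ℝ) ^ (1:ℝ) := (Real.rpow_one 2).symm
      _ < (2:ℝ) ^ ((d:ℝ) ^ N - τ * (sN d N : ℝ)) :=
          Real.rpow_lt_rpow_of_exponent_lt one_lt_two h1e
      _ ≤ (a:ℝ) ^ ((d:ℝ) ^ N - τ * (sN d N : ℝ)) :=
          Real.rpow_le_rpow (by norm_num) ha2 (by linarith)
  have hx := Real.rpow_pos_of_pos hapos (-((d:ℝ) ^ N))
  calc 2 * (a:ℝ) ^ (-((d:ℝ) ^ N))
      < (a:ℝ) ^ ((d:ℝ) ^ N - τ * (sN d N : ℝ)) * (a:ℝ) ^ (-((d:ℝ) ^ N)) :=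
        mul_lt_mul_of_pos_right h2e hx
    _ = (a:ℝ) ^ (((sN d N : ℕ) : ℝ) * (-τ)) := by
        rw [← Real.rpow_add hapos]; congr 1; ring

lemma bad_bound (ha : 2 ≤ a) (hd4 : 4 ≤ d) {c : ℝ} (hc : 0 < c) :
    ∃ N, 1 ≤ N ∧ 2 * eps a d N < c / ((Qden a d N : ℤ) : ℝ) ^ 2 := by
  have hd1 : 1 ≤ d := by omega
  have hapos : (0:ℝ) < (a:ℝ) := by positivity
  have ha0 : (a:ℝ) ≠ 0 := hapos.ne'
  have ha1 : (1:ℝ) ≤ (a:ℝ) := by exact_mod_cast Nat.one_le_of_lt ha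
  obtain ⟨n, hn⟩ := exists_pow_lt_of_lt_one hc (by norm_num : (1/2:ℝ) < 1)
  refine ⟨n + 1, by omega, ?_⟩
  set N := n + 1 with hNdef
  set S := sN d N with hSdef
  have hSN : N ≤ S := sN_ge hd1 N
  have hQ2 : ((Qden a d N : ℤ) : ℝ) ^ 2 = (a:ℝ) ^ (2 * S) := by
    rw [Qden]; push_cast; rw [← pow_mul, Nat.mul_comm S 2]
  have hexp : (2 * S : ℤ) + (N + 1 : ℤ) ≤ (d:ℤ) ^ N := by
    have hg := geom_id (d := d) N
    have hd' : (4:ℤ) ≤ (d:ℤ) := by exact_mod_cast hd4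
    have hSN' : (N:ℤ) ≤ (S:ℤ) := by exact_mod_cast hSN
    nlinarith
  have h1 : eps a d N ≤ (a:ℝ) ^ (-(2 * S + (N + 1) : ℤ)) := by
    rw [eps]
    apply zpow_le_zpow_right₀ ha1
    omega
  have hsplit : (a:ℝ) ^ (-(2 * S + (N + 1) : ℤ))
      = (a:ℝ) ^ (-(2 * S : ℤ)) * (a:ℝ) ^ (-((N:ℤ) + 1)) := by
    rw [← zpow_add₀ ha0]; congr 1; push_cast; ring
  have hsmall : 2 * (a:ℝ) ^ (-((N:ℤ) + 1)) < c := by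
    have he1 : (a:ℝ) ^ (-((N:ℤ) + 1)) = ((a:ℝ) ^ (N + 1 : ℕ))⁻¹ := by
      rw [zpow_neg]; norm_cast
    have he2 : ((a:ℝ) ^ (N + 1 : ℕ))⁻¹ ≤ ((2:ℝ) ^ (N + 1 : ℕ))⁻¹ := pow_anti ha _
    have he3 : 2 * ((2:ℝ) ^ (N + 1 : ℕ))⁻¹ = (1/2 : ℝ) ^ N := by
      rw [pow_succ, one_div, inv_pow]
      field_simp
    have he4 : (1/2 : ℝ) ^ N ≤ (1/2 : ℝ) ^ n := by
      apply pow_le_pow_of_le_one (by norm_num) (by norm_num)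
      omega
    calc 2 * (a:ℝ) ^ (-((N:ℤ) + 1)) ≤ 2 * ((2:ℝ) ^ (N + 1 : ℕ))⁻¹ := by
          rw [he1]; linarith
      _ = (1/2 : ℝ) ^ N := he3
      _ ≤ (1/2 : ℝ) ^ n := he4
      _ < c := hn
  have hz : (0:ℝ) < (a:ℝ) ^ (-(2 * S : ℤ)) := zpow_pos hapos _
  have hz2 : (a:ℝ) ^ (-(2 * S : ℤ)) = ((a:ℝ) ^ (2 * S : ℕ))⁻¹ := by
    rw [zpow_neg]; norm_cast
  have hcQ : c / ((Qden a d N : ℤ) : ℝ) ^ 2 = (a:ℝ) ^ (-(2 * S : ℤ)) * c := by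
    rw [hQ2, hz2, div_eq_mul_inv, mul_comm]
  rw [hcQ]
  calc 2 * eps a d N ≤ 2 * ((a:ℝ) ^ (-(2 * S : ℤ)) * (a:ℝ) ^ (-((N:ℤ) + 1))) := by
        rw [← hsplit]; linarith
    _ = (a:ℝ) ^ (-(2 * S : ℤ)) * (2 * (a:ℝ) ^ (-((N:ℤ) + 1))) := by ring
    _ < (a:ℝ) ^ (-(2 * S : ℤ)) * c := by
        exact mul_lt_mul_of_pos_left hsmall hz


end FdIrrAux

/-- Proposition 3: for `d ≥ 4` and `a ≥ 2`, the irrationality exponent of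
`f_d(a)` is at least `d - 1`; in particular `f_d(a)` is not badly approximable. -/
theorem fdReal_irrationality_exponent (a d : ℕ) (ha : 2 ≤ a) (hd4 : 4 ≤ d) :
    (∀ τ : ℝ, τ < (d : ℝ) - 1 →
      {PQ : ℤ × ℤ | 1 ≤ PQ.2 ∧ 0 < |fdReal a d - (PQ.1 : ℝ) / (PQ.2 : ℝ)| ∧
        |fdReal a d - (PQ.1 : ℝ) / (PQ.2 : ℝ)| < (PQ.2 : ℝ) ^ (-τ)}.Infinite) ∧
    ¬ badApproxReal (fdReal a d) := by
  have hd1 : 1 ≤ d := by omega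
  have hd2 : 2 ≤ d := by omega
  have hfd : fdReal a d = ∏' t, (1 - FdIrrAux.eps a d t) := rfl
  constructor
  · intro τ hτ
    refine Set.infinite_of_injective_forall_mem
      (f := fun n : ℕ => ((FdIrrAux.Pnum a d (n+1), FdIrrAux.Qden a d (n+1)) : ℤ × ℤ)) ?_ ?_
    · intro m k h
      have h2 := congrArg Prod.snd h
      simp only at h2
      have := (FdIrrAux.Qden_strictMono ha hd1).injective h2
      omega
    · intro n
      obtain ⟨hpos, hub⟩ := FdIrrAux.approx ha hd2 (n + 1)
      refine ⟨FdIrrAux.Qden_one_le ha (n+1), ?_, ?_⟩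
      · rw [hfd]; exact hpos
      · rw [hfd]
        exact lt_of_le_of_lt hub (FdIrrAux.rpow_bound ha hd4 hτ (by omega))
  · rintro ⟨c, hc, hall⟩
    obtain ⟨N, hN1, hbound⟩ := FdIrrAux.bad_bound ha hd4 hc
    obtain ⟨hpos, hub⟩ := FdIrrAux.approx ha hd2 N
    have h := hall (FdIrrAux.Pnum a d N) (FdIrrAux.Qden a d N) (FdIrrAux.Qden_one_le ha N)
    rw [hfd] at h
    linarith
end
end
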